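/- arXiv:2007.13700 — 6 statements merged into one kernel-verified Lean document; each statement's English description precedes it below -/
import Mathlib

section
/- Let n be a positive integer and let u : ℤ → ℝ be the constant kernel u(k) = 1/(2n+1) for |k| ≤ n and u(k) = 0 otherwise. Then sup over all nonzero f ∈ ℓ²(ℤ) of ‖∇(f*u)‖₂ / ‖f‖₂ equals exactly 2/(2n+1). -/
open scoped BigOperators

/-- Convolution of `f ∈ ℓ²(ℤ)` with a finitely supported kernel `u : ℤ → ℝ`:
`(f*u)(m) = ∑_{k} u(k) f(m-k)`. -/
noncomputable def conv (u : ℤ → ℝ) (f : ℤ → ℂ) : ℤ → ℂ :=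
  fun m => ∑' k : ℤ, (u k : ℂ) * f (m - k)

/-- The `ℓ²`-norm `(∑_{k∈ℤ} |f(k)|²)^{1/2}`. -/
noncomputable def l2norm (f : ℤ → ℂ) : ℝ :=
  Real.sqrt (∑' k : ℤ, ‖f k‖ ^ 2)

/-- The discrete derivative `(∇f)(k) = f(k+1) - f(k)`. -/
def dgrad (f : ℤ → ℂ) : ℤ → ℂ := fun k => f (k + 1) - f k

/-- The discrete Laplacian `(Δf)(k) = f(k+2) - 2f(k+1) + f(k)`. -/
def dlap (f : ℤ → ℂ) : ℤ → ℂ := fun k => f (k + 2) - 2 * f (k + 1) + f k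

/-! ### Auxiliary lemmas -/

open scoped ENNReal

private lemma l2norm_eq_lp (f : ℤ → ℂ) (hf : Memℓp f 2) :
    l2norm f = ‖(⟨f, hf⟩ : lp (fun _ : ℤ => ℂ) 2)‖ := by
  rw [lp.norm_eq_tsum_rpow (by norm_num) ⟨f, hf⟩, l2norm, Real.sqrt_eq_rpow]
  congr 1
  · exact tsum_congr fun k => by
      rw [show (2:ℝ≥0∞).toReal = ((2:ℕ):ℝ) by norm_num, Real.rpow_natCast]

private lemma l2norm_sub_le (f g : ℤ → ℂ) (hf : Memℓp f 2) (hg : Memℓp g 2) :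
    l2norm (fun m => f m - g m) ≤ l2norm f + l2norm g := by
  have hfg : Memℓp (fun m => f m - g m) 2 := hf.sub hg
  rw [l2norm_eq_lp f hf, l2norm_eq_lp g hg, l2norm_eq_lp _ hfg]
  exact norm_sub_le (⟨f, hf⟩ : lp (fun _ : ℤ => ℂ) 2) ⟨g, hg⟩

private lemma memℓp_two_iff (f : ℤ → ℂ) : Memℓp f 2 ↔ Summable (fun k => ‖f k‖ ^ 2) := by
  rw [memℓp_gen_iff (by norm_num)]
  exact summable_congr fun k => by
    rw [show (2:ℝ≥0∞).toReal = ((2:ℕ):ℝ) by norm_num, Real.rpow_natCast]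

private lemma l2norm_shift (f : ℤ → ℂ) (a : ℤ) : l2norm (fun m => f (m + a)) = l2norm f := by
  unfold l2norm
  congr 1
  exact (Equiv.addRight a).tsum_eq (fun k => ‖f k‖ ^ 2)

private lemma memℓp_shift {f : ℤ → ℂ} (hf : Memℓp f 2) (a : ℤ) :
    Memℓp (fun m => f (m + a)) 2 := by
  rw [memℓp_two_iff] at hf ⊢
  exact ((Equiv.addRight a).summable_iff (f := fun k => ‖f k‖ ^ 2)).2 hf

private lemma l2norm_const_mul (a : ℂ) (f : ℤ → ℂ) :
    l2norm (fun m => a * f m) = ‖a‖ * l2norm f := by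
  unfold l2norm
  have : ∀ m : ℤ, ‖a * f m‖ ^ 2 = ‖a‖ ^ 2 * ‖f m‖ ^ 2 := by
    intro m; rw [norm_mul, mul_pow]
  simp only [this]
  rw [tsum_mul_left, Real.sqrt_mul (sq_nonneg _), Real.sqrt_sq (norm_nonneg _)]

private lemma l2norm_pos {f : ℤ → ℂ} (hf : Memℓp f 2) (h0 : f ≠ 0) : 0 < l2norm f := by
  rw [memℓp_two_iff] at hf
  obtain ⟨k, hk⟩ : ∃ k, f k ≠ 0 := by
    by_contra h
    push_neg at h
    exact h0 (funext h)
  have h1 : 0 < ‖f k‖ ^ 2 := by have := norm_pos_iff.2 hk; positivity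
  have h2 : ‖f k‖ ^ 2 ≤ ∑' k, ‖f k‖ ^ 2 := Summable.le_tsum hf k (fun j _ => by positivity)
  exact Real.sqrt_pos.2 (lt_of_lt_of_le h1 h2)

private lemma telescope (f : ℤ → ℂ) (m : ℤ) : ∀ n : ℕ,
    ∑ k ∈ Finset.Icc (-(n:ℤ)) n, (f (m + 1 - k) - f (m - k)) = f (m + 1 + n) - f (m - n)
  | 0 => by simp
  | (n+1) => by
    have hset : Finset.Icc (-((n:ℤ)+1)) ((n:ℤ)+1)
        = insert (-((n:ℤ)+1)) (insert ((n:ℤ)+1) (Finset.Icc (-(n:ℤ)) n)) := by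
      ext k
      simp only [Finset.mem_Icc, Finset.mem_insert]
      omega
    have h1 : (-((n:ℤ)+1)) ∉ insert ((n:ℤ)+1) (Finset.Icc (-(n:ℤ)) n) := by
      simp only [Finset.mem_Icc, Finset.mem_insert]; omega
    have h2 : ((n:ℤ)+1) ∉ Finset.Icc (-(n:ℤ)) n := by
      simp only [Finset.mem_Icc]; omega
    push_cast
    rw [hset, Finset.sum_insert h1, Finset.sum_insert h2, telescope f m n]
    have e1 : m + 1 - -((n:ℤ)+1) = m + 1 + ((n:ℤ)+1) := by ring
    have e2 : m - -((n:ℤ)+1) = m + 1 + (n:ℤ) := by ring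
    have e3 : m + 1 - ((n:ℤ)+1) = m - (n:ℤ) := by ring
    rw [e1, e2, e3]
    ring

private lemma conv_eval (n : ℕ) (u : ℤ → ℝ)
    (hu : ∀ k : ℤ, u k = if |k| ≤ (n : ℤ) then (1 : ℝ) / (2 * n + 1) else 0)
    (f : ℤ → ℂ) (m : ℤ) :
    conv u f m = ∑ k ∈ Finset.Icc (-(n:ℤ)) n, ((1 / (2 * (n:ℝ) + 1) : ℝ) : ℂ) * f (m - k) := by
  unfold conv
  rw [tsum_eq_sum (s := Finset.Icc (-(n:ℤ)) n)]
  · refine Finset.sum_congr rfl fun k hk => ?_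
    rw [Finset.mem_Icc] at hk
    rw [hu k, if_pos (abs_le.2 ⟨hk.1, hk.2⟩)]
  · intro k hk
    rw [Finset.mem_Icc] at hk
    rw [hu k, if_neg (fun h => hk ⟨neg_le_of_abs_le h, le_of_abs_le h⟩)]
    simp

private lemma dgrad_conv (n : ℕ) (u : ℤ → ℝ)
    (hu : ∀ k : ℤ, u k = if |k| ≤ (n : ℤ) then (1 : ℝ) / (2 * n + 1) else 0)
    (f : ℤ → ℂ) (m : ℤ) :
    dgrad (conv u f) m
      = ((1 / (2 * (n:ℝ) + 1) : ℝ) : ℂ) * (f (m + 1 + n) - f (m - n)) := by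
  unfold dgrad
  rw [conv_eval n u hu f (m+1), conv_eval n u hu f m, ← Finset.sum_sub_distrib]
  rw [← telescope f m n, Finset.mul_sum]
  exact Finset.sum_congr rfl fun k _ => by ring

/-- test functions: point masses `(-1)^j` at `j*d`, `0 ≤ j < N`. -/
noncomputable def tf (d : ℤ) (N : ℕ) : ℤ → ℂ :=
  fun k => ∑ j ∈ Finset.range N, if k = (j:ℤ) * d then (-1:ℂ)^j else 0

private lemma tf_eval {d : ℤ} (hd : 0 < d) {N : ℕ} {j : ℕ} (hj : j < N) :
    tf d N ((j:ℤ) * d) = (-1:ℂ)^j := by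
  unfold tf
  rw [Finset.sum_eq_single j]
  · simp
  · intro b _ hb
    rw [if_neg]
    intro h
    have : (b:ℤ) = (j:ℤ) := mul_right_cancel₀ hd.ne' h.symm
    exact hb (by exact_mod_cast this)
  · intro h; exact absurd (Finset.mem_range.2 hj) h

private lemma tf_zero {d : ℤ} {N : ℕ} {k : ℤ} (h : ∀ j : ℕ, j < N → k ≠ (j:ℤ) * d) :
    tf d N k = 0 := by
  unfold tf
  exact Finset.sum_eq_zero fun j hj => if_neg (h j (Finset.mem_range.1 hj))

private lemma tf_sum_sq {d : ℤ} (hd : 0 < d) {N : ℕ} :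
    ∑' k : ℤ, ‖tf d N k‖ ^ 2 = N := by
  have hinj : Function.Injective (fun j : ℕ => (j:ℤ) * d) := fun a b h => by
    have : (a:ℤ) = (b:ℤ) := mul_right_cancel₀ hd.ne' h
    exact_mod_cast this
  rw [tsum_eq_sum (s := (Finset.range N).map ⟨_, hinj⟩)]
  · rw [Finset.sum_map]
    have : ∀ j ∈ Finset.range N, ‖tf d N ((⟨_, hinj⟩ : ℕ ↪ ℤ) j)‖ ^ 2 = 1 := by
      intro j hj
      simp only [Function.Embedding.coeFn_mk]
      rw [tf_eval hd (Finset.mem_range.1 hj)]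
      simp
    rw [Finset.sum_congr rfl this]
    simp
  · intro k hk
    rw [tf_zero (fun j hj hkj => hk (Finset.mem_map.2 ⟨j, Finset.mem_range.2 hj, hkj.symm⟩))]
    simp

private lemma tf_memℓp {d : ℤ} (hd : 0 < d) (N : ℕ) : Memℓp (tf d N) 2 := by
  rw [memℓp_two_iff]
  have hinj : Function.Injective (fun j : ℕ => (j:ℤ) * d) := fun a b h => by
    have : (a:ℤ) = (b:ℤ) := mul_right_cancel₀ hd.ne' h
    exact_mod_cast this
  apply summable_of_ne_finset_zero (s := (Finset.range N).map ⟨_, hinj⟩)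
  intro k hk
  rw [tf_zero (fun j hj hkj => hk (Finset.mem_map.2 ⟨j, Finset.mem_range.2 hj, hkj.symm⟩))]
  simp

private lemma tf_grad_sum {d : ℤ} (hd : 0 < d) (M : ℕ) :
    ∑' m : ℤ, ‖tf d (M+1) (m + d) - tf d (M+1) m‖ ^ 2 = 4*(M+1) - 2 := by
  set N := M + 1 with hN
  have hNpos : 0 < N := Nat.succ_pos M
  have hinj : Function.Injective (fun j : ℕ => (j:ℤ) * d - d) := fun a b h => by
    have : (a:ℤ) = (b:ℤ) := mul_right_cancel₀ hd.ne'
      (by linarith [sub_left_injective.eq_iff.mp h] : (a:ℤ)*d = b*d)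
    exact_mod_cast this
  rw [tsum_eq_sum (s := (Finset.range (M+2)).map ⟨_, hinj⟩)]
  · rw [Finset.sum_map]
    simp only [Function.Embedding.coeFn_mk, sub_add_cancel]
    have key : ∀ j ∈ Finset.range (M+2),
        ‖tf d N ((j:ℤ)*d) - tf d N ((j:ℤ)*d - d)‖ ^ 2
          = if j = 0 then 1 else if j = M+1 then 1 else 4 := by
      intro j hj
      rw [Finset.mem_range] at hj
      rcases Nat.eq_zero_or_pos j with rfl | hjpos
      · rw [if_pos rfl]
        have h0 : tf d N (((0:ℕ):ℤ)*d) = (-1:ℂ)^(0:ℕ) := tf_eval hd hNpos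
        have hneg : tf d N (((0:ℕ):ℤ)*d - d) = 0 := by
          apply tf_zero
          intro i _ hik
          have h1 : (0:ℤ) ≤ (i:ℤ)*d := mul_nonneg (Int.natCast_nonneg i) hd.le
          omega
        rw [h0, hneg]
        simp
      · obtain ⟨i, rfl⟩ := Nat.exists_eq_succ_of_ne_zero hjpos.ne'
        rw [if_neg (Nat.succ_ne_zero i)]
        have harg : ((i+1:ℕ):ℤ)*d - d = ((i:ℕ):ℤ)*d := by push_cast; ring
        have hlow : tf d N (((i+1:ℕ):ℤ)*d - d) = (-1:ℂ)^i := by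
          rw [harg]; exact tf_eval hd (by omega)
        by_cases hiM : i + 1 = M + 1
        · rw [if_pos hiM]
          have htop : tf d N (((i+1:ℕ):ℤ)*d) = 0 := by
            apply tf_zero
            intro i' hi' hik
            have : (i':ℤ) = ((i+1:ℕ):ℤ) := mul_right_cancel₀ hd.ne' hik.symm
            have : i' = i + 1 := by exact_mod_cast this
            omega
          rw [htop, hlow]
          simp
        · rw [if_neg hiM]
          have htop : tf d N (((i+1:ℕ):ℤ)*d) = (-1:ℂ)^(i+1) := tf_eval hd (by omega)
          rw [htop, hlow]
          have : (-1:ℂ)^(i+1) - (-1)^i = (-2) * (-1)^i := by rw [pow_succ]; ring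
          rw [this]
          simp [norm_mul, mul_pow]
          norm_num
    rw [Finset.sum_congr rfl key]
    rw [Finset.sum_range_succ', Finset.sum_range_succ]
    have hmid : ∀ i ∈ Finset.range M,
        (if i + 1 = 0 then (1:ℝ) else if i + 1 = M+1 then 1 else 4) = 4 := by
      intro i hi
      rw [Finset.mem_range] at hi
      rw [if_neg (Nat.succ_ne_zero i), if_neg (by omega)]
    rw [Finset.sum_congr rfl hmid, Finset.sum_const]
    rw [if_neg (Nat.succ_ne_zero M), if_pos rfl, if_pos rfl]
    simp [Finset.card_range]
    push_cast
    ring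
  · intro m hm
    have h1 : tf d N (m + d) = 0 := by
      apply tf_zero
      intro j hj hmj
      exact hm (Finset.mem_map.2 ⟨j, Finset.mem_range.2 (by omega), by
        simp only [Function.Embedding.coeFn_mk]; linarith⟩)
    have h2 : tf d N m = 0 := by
      apply tf_zero
      intro j hj hmj
      exact hm (Finset.mem_map.2 ⟨j+1, Finset.mem_range.2 (by omega), by
        simp only [Function.Embedding.coeFn_mk]; push_cast; linarith⟩)
    rw [h1, h2]
    simp

theorem smoothest_average_first_derivative_constant_kernel
    (n : ℕ) (hn : 1 ≤ n) (u : ℤ → ℝ)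
    (hu : ∀ k : ℤ, u k = if |k| ≤ (n : ℤ) then (1 : ℝ) / (2 * n + 1) else 0) :
    sSup {r : ℝ | ∃ f : ℤ → ℂ, Memℓp f 2 ∧ f ≠ 0 ∧
        r = l2norm (dgrad (conv u f)) / l2norm f} = 2 / (2 * (n : ℝ) + 1) := by
  set c : ℝ := 1 / (2 * (n:ℝ) + 1) with hc
  have hcpos : 0 < c := by positivity
  set S := {r : ℝ | ∃ f : ℤ → ℂ, Memℓp f 2 ∧ f ≠ 0 ∧
      r = l2norm (dgrad (conv u f)) / l2norm f} with hS
  -- the key norm identity for dgrad ∘ conv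
  have hkey : ∀ f : ℤ → ℂ,
      l2norm (dgrad (conv u f))
        = c * l2norm (fun m => f (m + ((n:ℤ)+1)) - f (m + (-(n:ℤ)))) := by
    intro f
    have : dgrad (conv u f)
        = fun m => ((c:ℝ) : ℂ) * ((fun m => f (m + ((n:ℤ)+1))) m - (fun m => f (m + (-(n:ℤ)))) m) := by
      funext m
      rw [dgrad_conv n u hu f m, show m + 1 + (n:ℤ) = m + ((n:ℤ)+1) from by ring,
        sub_eq_add_neg m (n:ℤ)]
    rw [this, l2norm_const_mul]
    simp only []
    congr 1
    rw [Complex.norm_real, Real.norm_eq_abs, abs_of_pos hcpos]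
  -- upper bound
  have hub : ∀ r ∈ S, r ≤ 2 / (2 * (n:ℝ) + 1) := by
    rintro r ⟨f, hf, hf0, rfl⟩
    have hfpos := l2norm_pos hf hf0
    rw [div_le_iff₀ hfpos, hkey f]
    have htri := l2norm_sub_le _ _ (memℓp_shift hf ((n:ℤ)+1)) (memℓp_shift hf (-(n:ℤ)))
    rw [l2norm_shift, l2norm_shift] at htri
    calc c * l2norm (fun m => f (m + ((n:ℤ)+1)) - f (m + (-(n:ℤ))))
        ≤ c * (l2norm f + l2norm f) := by
          exact mul_le_mul_of_nonneg_left htri hcpos.le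
      _ = 2 / (2 * (n:ℝ) + 1) * l2norm f := by rw [hc]; ring
  have hbdd : BddAbove S := ⟨_, hub⟩
  -- the test-function ratios
  have hd : (0:ℤ) < 2*(n:ℤ)+1 := by positivity
  have hratio : ∀ M : ℕ, (c * Real.sqrt (4*(M:ℝ)+2)) / Real.sqrt ((M:ℝ)+1) ∈ S := by
    intro M
    set d : ℤ := 2*(n:ℤ)+1 with hdd
    set N : ℕ := M + 1 with hNN
    refine ⟨tf d N, tf_memℓp hd N, ?_, ?_⟩
    · intro h
      have h0 : tf d N (((0:ℕ):ℤ)*d) = (-1:ℂ)^(0:ℕ) := tf_eval hd (Nat.succ_pos M)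
      rw [h] at h0
      simp at h0
    · rw [hkey]
      have hrw : (fun m => tf d N (m + ((n:ℤ)+1)) - tf d N (m + (-(n:ℤ))))
          = fun m => (fun m' => tf d N (m' + d) - tf d N m') (m + (-(n:ℤ))) := by
        funext m
        simp only []
        congr 2
        rw [hdd]; ring
      rw [hrw, l2norm_shift (fun m' => tf d N (m' + d) - tf d N m') (-(n:ℤ))]
      unfold l2norm
      rw [tf_grad_sum hd M, tf_sum_sq hd]
      rw [hNN]
      push_cast
      rw [show (4:ℝ)*((M:ℝ)+1) - 2 = 4*(M:ℝ)+2 by ring]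
  -- conclude
  apply le_antisymm (csSup_le ⟨_, hratio 0⟩ hub)
  refine le_of_forall_lt fun x hx => ?_
  -- choose M large
  have h2c : x < 2 * c := by
    have h2c' : 2 * c = 2 / (2 * (n:ℝ) + 1) := by rw [hc]; ring
    linarith [hx]
  obtain ⟨M₀, hM₀⟩ := exists_nat_gt (2 * c / (2 * c - x))
  set M : ℕ := M₀ + 1 with hM
  have hMpos : (1:ℝ) ≤ (M:ℝ) + 1 := by
    have : (0:ℝ) ≤ (M:ℝ) := Nat.cast_nonneg M
    linarith
  have hMgt : 2 * c / (2 * c - x) < (M:ℝ) + 1 := by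
    push_cast
    linarith [hM₀, (show (M:ℝ) = (M₀:ℝ) + 1 by rw [hM]; push_cast; ring)]
  have hδ : 0 < 2 * c - x := by linarith
  have hstep : 2 * c / ((M:ℝ)+1) < 2 * c - x := by
    rw [div_lt_iff₀ (by positivity)]
    rw [div_lt_iff₀ hδ] at hMgt
    linarith [hMgt]
  have hlow : c * (2 - 2/((M:ℝ)+1)) ≤ (c * Real.sqrt (4*(M:ℝ)+2)) / Real.sqrt ((M:ℝ)+1) := by
    have hsN : 0 < Real.sqrt ((M:ℝ)+1) := Real.sqrt_pos.2 (by positivity)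
    rw [le_div_iff₀ hsN]
    have h1 : 0 ≤ 2 - 2/((M:ℝ)+1) := by
      have : 2/((M:ℝ)+1) ≤ 2 := by
        rw [div_le_iff₀ (by positivity)]; nlinarith
      linarith
    have h2 : (2 - 2/((M:ℝ)+1)) * Real.sqrt ((M:ℝ)+1)
        = Real.sqrt ((2 - 2/((M:ℝ)+1))^2 * ((M:ℝ)+1)) := by
      rw [Real.sqrt_mul (sq_nonneg _), Real.sqrt_sq h1]
    have h3 : (2 - 2/((M:ℝ)+1))^2 * ((M:ℝ)+1) ≤ 4*(M:ℝ)+2 := by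
      have hMne : ((M:ℝ)+1) ≠ 0 := by positivity
      have hinv : ((M:ℝ)+1) * (1/((M:ℝ)+1)) = 1 := by field_simp
      have hexp : (2 - 2/((M:ℝ)+1))^2 * ((M:ℝ)+1) = 4*((M:ℝ)+1) - 8 + 4/((M:ℝ)+1) := by
        field_simp
        ring
      rw [hexp]
      have : 4/((M:ℝ)+1) ≤ 4 := by
        rw [div_le_iff₀ (by positivity)]; nlinarith
      linarith
    calc c * (2 - 2/((M:ℝ)+1)) * Real.sqrt ((M:ℝ)+1)
        = c * ((2 - 2/((M:ℝ)+1)) * Real.sqrt ((M:ℝ)+1)) := by ring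
      _ = c * Real.sqrt ((2 - 2/((M:ℝ)+1))^2 * ((M:ℝ)+1)) := by rw [h2]
      _ ≤ c * Real.sqrt (4*(M:ℝ)+2) := by
          exact mul_le_mul_of_nonneg_left (Real.sqrt_le_sqrt h3) hcpos.le
  have hxlt : x < c * (2 - 2/((M:ℝ)+1)) := by
    have : c * (2 - 2/((M:ℝ)+1)) = 2*c - 2*c/((M:ℝ)+1) := by ring
    rw [this]
    linarith [hstep]
  exact lt_of_lt_of_le (lt_of_lt_of_le hxlt hlow) (le_csSup hbdd (hratio M))
end

section
/- Let n be a positive integer and let u : ℤ → ℝ be supported on {-n, ..., n}, symmetric (u(-k) = u(k) for all k), and normalized so that ∑_{k=-n}^{n} u(k) = 1. If sup over all nonzero f ∈ ℓ²(ℤ) of ‖∇(f*u)‖₂ / ‖f‖₂ equals 2/(2n+1), then u(k) = 1/(2n+1) for all k with |k| ≤ n. -/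
open scoped BigOperators

section SAhelpers
open Real Finset
open scoped ENNReal


lemma SA_exp_sum (N : ℕ) (hN : 0 < N) (c : ℤ) (hc : ¬ (N:ℤ) ∣ c) :
    ∑ j ∈ Finset.range N, Complex.exp (((c*(2*j+1)*π/N : ℝ) : ℂ) * Complex.I) = 0 := by
  set z : ℂ := Complex.exp (((2*c*π/N : ℝ) : ℂ) * Complex.I) with hz
  set a : ℂ := Complex.exp (((c*π/N : ℝ) : ℂ) * Complex.I) with ha
  have hNR : (N:ℝ) ≠ 0 := Nat.cast_ne_zero.mpr hN.ne'
  have hNC : (N:ℂ) ≠ 0 := Nat.cast_ne_zero.mpr hN.ne'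
  have hterm : ∀ j ∈ Finset.range N,
      Complex.exp (((c*(2*j+1)*π/N : ℝ) : ℂ) * Complex.I) = a * z ^ j := by
    intro j _
    rw [hz, ha, ← Complex.exp_nat_mul, ← Complex.exp_add]
    congr 1
    push_cast
    field_simp
    ring
  rw [Finset.sum_congr rfl hterm, ← Finset.mul_sum]
  have hz1 : z ≠ 1 := by
    intro h
    rcases Complex.exp_eq_one_iff.1 (hz ▸ h) with ⟨m, hm⟩
    have him := congrArg Complex.im hm
    simp at him
    have h2 : (c:ℝ) * (2*π) = ((m * N : ℤ) : ℝ) * (2*π) := by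
      push_cast
      have hre : 2 * (c:ℝ) * π / N = m * (2*π) := by
        field_simp at him ⊢
        linarith [him]
      field_simp at hre
      rw [hre]; ring
    have h3 : (c:ℝ) = ((m*N : ℤ):ℝ) :=
      mul_right_cancel₀ (by positivity : (0:ℝ) < 2*π).ne' h2
    exact hc ⟨m, by rw [mul_comm]; exact_mod_cast h3⟩
  have hzN : z ^ N = 1 := by
    rw [hz, ← Complex.exp_nat_mul]
    have h4 : (N:ℂ) * (((2*c*π/N : ℝ) : ℂ) * Complex.I) = (c:ℂ) * (2*(π:ℂ)*Complex.I) := by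
      push_cast
      field_simp
    rw [h4, Complex.exp_int_mul_two_pi_mul_I]
  rw [geom_sum_eq hz1, hzN]
  simp

lemma SA_cos_sum (N : ℕ) (hN : 0 < N) (c : ℤ) (hc1 : c ≠ 0) (hc2 : |c| < N) :
    ∑ j ∈ Finset.range N, Real.cos ((c:ℝ)*(2*j+1)*π/N) = 0 := by
  have hdvd : ¬ (N:ℤ) ∣ c := fun h => hc1 (Int.eq_zero_of_abs_lt_dvd h hc2)
  have h := SA_exp_sum N hN c hdvd
  have h2 : ∀ j ∈ Finset.range N, Real.cos ((c:ℝ)*(2*j+1)*π/N)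
      = (Complex.exp (((c*(2*j+1)*π/N : ℝ) : ℂ) * Complex.I)).re :=
    fun j _ => (Complex.exp_ofReal_mul_I_re _).symm
  rw [Finset.sum_congr rfl h2, ← Complex.re_sum, h]
  rfl

lemma SA_cos_nat_pi (j : ℕ) : Real.cos ((j:ℝ)*π) = (-1:ℝ)^j := by
  induction j with
  | zero => simp
  | succ m ih =>
      have : ((m+1 : ℕ):ℝ)*π = (m:ℝ)*π + π := by push_cast; ring
      rw [this, Real.cos_add_pi, ih]
      ring

lemma SA_sin_halfodd (j : ℕ) : Real.sin ((2*(j:ℝ)+1)*π/2) = (-1:ℝ)^j := by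
  have : (2*(j:ℝ)+1)*π/2 = (j:ℝ)*π + π/2 := by ring
  rw [this, Real.sin_add_pi_div_two, SA_cos_nat_pi]

lemma SA_dirichlet (m : ℕ) (φ : ℝ) :
    Real.sin ((2*(m:ℝ)+1)*φ) =
      Real.sin φ * (1 + 2*∑ k ∈ Finset.range m, Real.cos (2*((k:ℝ)+1)*φ)) := by
  induction m with
  | zero => simp
  | succ m ih =>
      have key : Real.sin ((2*((m:ℝ)+1)+1)*φ) - Real.sin ((2*(m:ℝ)+1)*φ)
          = 2 * Real.sin φ * Real.cos (2*((m:ℝ)+1)*φ) := by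
        rw [Real.sin_sub_sin]
        congr 2 <;> ring
      have hsum := Finset.sum_range_succ (fun k => Real.cos (2*((k:ℝ)+1)*φ)) m
      push_cast at *
      linear_combination key + ih - 2 * Real.sin φ * hsum

noncomputable def SAphi (N : ℕ) (j : ℕ) : ℝ := (2*j+1)*π/(2*N)

lemma SAphi_pos {N : ℕ} (hN : 0 < N) (j : ℕ) : 0 < SAphi N j := by
  unfold SAphi
  have := Real.pi_pos
  positivity

lemma SAphi_lt_pi {N : ℕ} (j : ℕ) (hj : j < N) : SAphi N j < π := by
  unfold SAphi
  have hπ := Real.pi_pos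
  have hN : 0 < N := lt_of_le_of_lt (Nat.zero_le j) hj
  have h2N : (0:ℝ) < 2*N := by positivity
  rw [div_lt_iff₀ h2N]
  have : (2*(j:ℝ)+1) < 2*N := by
    have : (j:ℝ) + 1 ≤ N := by exact_mod_cast hj
    linarith
  nlinarith

lemma SA_sin_phi_pos {N : ℕ} (j : ℕ) (hj : j < N) : 0 < Real.sin (SAphi N j) :=
  Real.sin_pos_of_pos_of_lt_pi (SAphi_pos (lt_of_le_of_lt (Nat.zero_le j) hj) j) (SAphi_lt_pi j hj)

lemma SA_sin_N_phi {N : ℕ} (hN : 0 < N) (j : ℕ) :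
    Real.sin ((N:ℝ) * SAphi N j) = (-1:ℝ)^j := by
  have hNR : (N:ℝ) ≠ 0 := Nat.cast_ne_zero.mpr hN.ne'
  have : (N:ℝ) * SAphi N j = (2*(j:ℝ)+1)*π/2 := by
    unfold SAphi; field_simp
  rw [this, SA_sin_halfodd]

noncomputable def SAE (n : ℕ) (k : ℤ) : ℝ :=
  ∑ j ∈ Finset.range (2*n+1), (-1:ℝ)^j * Real.sin ((2*(k:ℝ)-1) * SAphi (2*n+1) j)

noncomputable def SAB (n : ℕ) (k : ℤ) : ℝ :=
  ∑ j ∈ Finset.range (2*n+1), (-1:ℝ)^j * Real.cos (2*(k:ℝ) * SAphi (2*n+1) j)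
    / Real.sin (SAphi (2*n+1) j)

noncomputable def SAA (n : ℕ) (k : ℤ) : ℝ :=
  ∑ j ∈ Finset.range (2*n+1), (-1:ℝ)^j * Real.sin ((2*(k:ℝ)+1) * SAphi (2*n+1) j)
    / (Real.sin (SAphi (2*n+1) j))^2

lemma SAE_zero (n : ℕ) (hn : 1 ≤ n) (k : ℤ) (hk1 : 1-(n:ℤ) ≤ k) (hk2 : k ≤ n) :
    SAE n k = 0 := by
  have hN : 0 < 2*n+1 := by omega
  have hNR : ((2*n+1 : ℕ):ℝ) ≠ 0 := Nat.cast_ne_zero.mpr hN.ne'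
  have hterm : ∀ j ∈ Finset.range (2*n+1),
      (-1:ℝ)^j * Real.sin ((2*(k:ℝ)-1) * SAphi (2*n+1) j)
      = (Real.cos ((((n:ℤ)+1-k : ℤ):ℝ)*(2*j+1)*π/(2*n+1))
         - Real.cos ((((n:ℤ)+k : ℤ):ℝ)*(2*j+1)*π/(2*n+1))) / 2 := by
    intro j hj
    rw [← SA_sin_N_phi hN j]
    have h2 := Real.two_mul_sin_mul_sin (((2*n+1:ℕ):ℝ) * SAphi (2*n+1) j)
      ((2*(k:ℝ)-1) * SAphi (2*n+1) j)
    have e1 : ((2*n+1:ℕ):ℝ) * SAphi (2*n+1) j - (2*(k:ℝ)-1) * SAphi (2*n+1) j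
        = (((n:ℤ)+1-k : ℤ):ℝ)*(2*j+1)*π/(2*n+1) := by
      unfold SAphi; push_cast; field_simp; ring
    have e2 : ((2*n+1:ℕ):ℝ) * SAphi (2*n+1) j + (2*(k:ℝ)-1) * SAphi (2*n+1) j
        = (((n:ℤ)+k : ℤ):ℝ)*(2*j+1)*π/(2*n+1) := by
      unfold SAphi; push_cast; field_simp; ring
    rw [e1, e2] at h2
    linarith [h2]
  have hc1 := SA_cos_sum (2*n+1) hN ((n:ℤ)+1-k) (by omega)
    (by rw [abs_lt]; constructor <;> push_cast <;> omega)
  have hc2 := SA_cos_sum (2*n+1) hN ((n:ℤ)+k) (by omega)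
    (by rw [abs_lt]; constructor <;> push_cast <;> omega)
  rw [SAE, Finset.sum_congr rfl hterm, ← Finset.sum_div, Finset.sum_sub_distrib]
  push_cast at hc1 hc2 ⊢
  rw [hc1, hc2]
  norm_num

lemma SAB_sub (n : ℕ) (k : ℤ) : SAB n k - SAB n (k-1) = -2 * SAE n k := by
  rw [SAB, SAB, SAE, ← Finset.sum_sub_distrib, Finset.mul_sum]
  apply Finset.sum_congr rfl
  intro j hj
  have hj' : j < 2*n+1 := Finset.mem_range.mp hj
  have hs : Real.sin (SAphi (2*n+1) j) ≠ 0 := (SA_sin_phi_pos j hj').ne'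
  set φ := SAphi (2*n+1) j
  have h := Real.cos_sub_cos (2*(k:ℝ)*φ) (2*(((k-1 : ℤ)):ℝ)*φ)
  have e1 : (2*(k:ℝ)*φ + 2*(((k-1:ℤ)):ℝ)*φ)/2 = (2*(k:ℝ)-1)*φ := by push_cast; ring
  have e2 : (2*(k:ℝ)*φ - 2*(((k-1:ℤ)):ℝ)*φ)/2 = φ := by push_cast; ring
  rw [e1, e2] at h
  rw [div_sub_div_same, div_eq_iff hs]
  linear_combination ((-1:ℝ)^j) * h

lemma SAB_even (n : ℕ) (k : ℤ) : SAB n (-k) = SAB n k := by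
  rw [SAB, SAB]
  apply Finset.sum_congr rfl
  intro j hj
  have : 2*((-k : ℤ):ℝ) * SAphi (2*n+1) j = -(2*(k:ℝ) * SAphi (2*n+1) j) := by push_cast; ring
  rw [this, Real.cos_neg]

lemma SAB_zero (n : ℕ) (hn : 1 ≤ n) : SAB n 0 = (2*(n:ℝ)+1) := by
  have hN : 0 < 2*n+1 := by omega
  have hterm : ∀ j ∈ Finset.range (2*n+1),
      (-1:ℝ)^j * Real.cos (2*((0:ℤ):ℝ) * SAphi (2*n+1) j) / Real.sin (SAphi (2*n+1) j)
      = 1 + 2*∑ k ∈ Finset.range n, Real.cos (2*((k:ℝ)+1)*SAphi (2*n+1) j) := by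
    intro j hj
    have hj' : j < 2*n+1 := Finset.mem_range.mp hj
    have hs : Real.sin (SAphi (2*n+1) j) ≠ 0 := (SA_sin_phi_pos j hj').ne'
    have hd := SA_dirichlet n (SAphi (2*n+1) j)
    have hNphi : (2*(n:ℝ)+1) * SAphi (2*n+1) j = ((2*n+1 : ℕ):ℝ) * SAphi (2*n+1) j := by
      push_cast; ring
    rw [hNphi, SA_sin_N_phi hN j] at hd
    rw [show (2*((0:ℤ):ℝ) * SAphi (2*n+1) j) = 0 by push_cast; ring, Real.cos_zero,
      mul_one, div_eq_iff hs]
    linear_combination hd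
  rw [SAB, Finset.sum_congr rfl hterm, Finset.sum_add_distrib]
  simp only [Finset.sum_const, Finset.card_range, nsmul_eq_mul, mul_one]
  have hswap : ∑ j ∈ Finset.range (2*n+1), 2*∑ k ∈ Finset.range n,
      Real.cos (2*((k:ℝ)+1)*SAphi (2*n+1) j)
      = 2*∑ k ∈ Finset.range n, ∑ j ∈ Finset.range (2*n+1),
      Real.cos (2*((k:ℝ)+1)*SAphi (2*n+1) j) := by
    rw [← Finset.mul_sum, Finset.sum_comm]
  rw [hswap]
  have hz : ∀ k ∈ Finset.range n, ∑ j ∈ Finset.range (2*n+1),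
      Real.cos (2*((k:ℝ)+1)*SAphi (2*n+1) j) = 0 := by
    intro k hk
    have hk' : k < n := Finset.mem_range.mp hk
    have hc := SA_cos_sum (2*n+1) hN ((k:ℤ)+1) (by omega)
      (by rw [abs_lt]; constructor <;> push_cast <;> omega)
    rw [← hc]
    apply Finset.sum_congr rfl
    intro j hj
    congr 1
    unfold SAphi
    push_cast
    field_simp
  rw [Finset.sum_congr rfl hz]
  push_cast
  simp


lemma SAB_const (n : ℕ) (hn : 1 ≤ n) : ∀ k : ℤ, |k| ≤ (n:ℤ) → SAB n k = (2*(n:ℝ)+1) := by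
  have hnat : ∀ i : ℕ, (i:ℤ) ≤ (n:ℤ) → SAB n (i:ℤ) = (2*(n:ℝ)+1) := by
    intro i
    induction i with
    | zero => intro _; exact_mod_cast SAB_zero n hn
    | succ m ih =>
        intro hm
        have h1 := SAB_sub n ((m:ℤ)+1)
        have h2 := SAE_zero n hn ((m:ℤ)+1) (by omega) (by omega)
        rw [h2] at h1
        have h3 : ((m:ℤ)+1) - 1 = (m:ℤ) := by ring
        rw [h3] at h1
        have h4 := ih (by omega)
        have : ((m+1 : ℕ):ℤ) = (m:ℤ)+1 := by push_cast; ring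
        rw [this]
        linarith
  intro k hk
  have hk' := abs_le.mp hk
  rcases le_or_gt 0 k with h | h
  · lift k to ℕ using h with i hi
    exact hnat i (by omega)
  · have : k = -((-k).toNat : ℤ) := by omega
    rw [this, SAB_even]
    exact hnat (-k).toNat (by omega)

lemma SAA_sub (n : ℕ) (k : ℤ) : SAA n k - SAA n (k-1) = 2 * SAB n k := by
  rw [SAA, SAA, SAB, ← Finset.sum_sub_distrib, Finset.mul_sum]
  apply Finset.sum_congr rfl
  intro j hj
  have hj' : j < 2*n+1 := Finset.mem_range.mp hj
  have hs : Real.sin (SAphi (2*n+1) j) ≠ 0 := (SA_sin_phi_pos j hj').ne'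
  set φ := SAphi (2*n+1) j
  have h := Real.sin_sub_sin ((2*(k:ℝ)+1)*φ) ((2*(((k-1:ℤ)):ℝ)+1)*φ)
  have e1 : (((2*(k:ℝ)+1)*φ - (2*(((k-1:ℤ)):ℝ)+1)*φ))/2 = φ := by push_cast; ring
  have e2 : (((2*(k:ℝ)+1)*φ + (2*(((k-1:ℤ)):ℝ)+1)*φ))/2 = 2*(k:ℝ)*φ := by push_cast; ring
  rw [e1, e2] at h
  have hs2 : (Real.sin φ)^2 ≠ 0 := pow_ne_zero 2 hs
  push_cast at h ⊢
  field_simp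
  ring_nf at h ⊢
  linear_combination h

lemma SAA_odd (n : ℕ) (k : ℤ) : SAA n (-k-1) = -SAA n k := by
  rw [SAA, SAA, ← Finset.sum_neg_distrib]
  apply Finset.sum_congr rfl
  intro j hj
  set φ := SAphi (2*n+1) j
  have : (2*((-k-1 : ℤ):ℝ)+1)*φ = -((2*(k:ℝ)+1)*φ) := by push_cast; ring
  rw [this, Real.sin_neg]
  ring

lemma SAA_val (n : ℕ) (hn : 1 ≤ n) :
    ∀ k : ℤ, |k| ≤ (n:ℤ) → SAA n k = (2*(k:ℝ)+1)*(2*(n:ℝ)+1) := by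
  have hA0 : SAA n 0 = (2*(n:ℝ)+1) := by
    have h1 := SAA_sub n 0
    have h2 := SAA_odd n 0
    rw [show ((-0:ℤ) - 1 : ℤ) = (0:ℤ)-1 by ring] at h2
    rw [h2, SAB_const n hn 0 (by simp)] at h1
    linarith
  have hnat : ∀ i : ℕ, (i:ℤ) ≤ (n:ℤ) → SAA n (i:ℤ) = (2*(i:ℝ)+1)*(2*(n:ℝ)+1) := by
    intro i
    induction i with
    | zero => intro _; simpa using hA0
    | succ m ih =>
        intro hm
        have h1 := SAA_sub n ((m:ℤ)+1)
        rw [SAB_const n hn ((m:ℤ)+1) (by rw [abs_le]; omega), show ((m:ℤ)+1) - 1 = (m:ℤ) by ring] at h1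
        have h4 := ih (by omega)
        have : ((m+1 : ℕ):ℤ) = (m:ℤ)+1 := by push_cast; ring
        rw [this]
        push_cast at h4 ⊢
        linarith
  intro k hk
  have hk' := abs_le.mp hk
  rcases le_or_gt 0 k with h | h
  · lift k to ℕ using h with i hi
    exact hnat i (by omega)
  · set m : ℕ := (-k-1).toNat with hm
    have hkm : k = -(m:ℤ)-1 := by omega
    rw [hkm, SAA_odd, hnat m (by omega)]
    push_cast
    ring

lemma SA_sum_invsin2 (n : ℕ) (hn : 1 ≤ n) :
    ∑ j ∈ Finset.range (2*n+1), 1/(Real.sin (SAphi (2*n+1) j))^2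
      = (2*(n:ℝ)+1)*(2*(n:ℝ)+1) := by
  have h := SAA_val n hn (n:ℤ) (by simp)
  rw [SAA] at h
  push_cast at h
  rw [← h]
  apply Finset.sum_congr rfl
  intro j hj
  have hN : 0 < 2*n+1 := by omega
  have hphi : (2*(n:ℝ)+1) * SAphi (2*n+1) j = ((2*n+1:ℕ):ℝ) * SAphi (2*n+1) j := by
    push_cast; ring
  rw [hphi, SA_sin_N_phi hN j]
  rw [show ((-1:ℝ)^j * (-1:ℝ)^j) = 1 by rw [← pow_add, ← two_mul, pow_mul]; norm_num]

lemma SA_odd_sum (n : ℕ) (u : ℤ → ℝ) (hsymm : ∀ k : ℤ, u (-k) = u k)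
    (g : ℤ → ℝ) (hg : ∀ k, g (-k) = -(g k)) :
    ∑ k ∈ Finset.Icc (-(n:ℤ)) (n:ℤ), u k * g k = 0 := by
  have h1 : ∑ k ∈ Finset.Icc (-(n:ℤ)) (n:ℤ), u k * g k
      = ∑ k ∈ Finset.Icc (-(n:ℤ)) (n:ℤ), -(u k * g k) := by
    apply Finset.sum_equiv (Equiv.neg ℤ)
    · intro i
      simp only [Finset.mem_Icc, Equiv.neg_apply]
      omega
    · intro i _
      rw [Equiv.neg_apply, hsymm, hg]
      ring
  have h2 : ∑ k ∈ Finset.Icc (-(n:ℤ)) (n:ℤ), -(u k * g k)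
      = -∑ k ∈ Finset.Icc (-(n:ℤ)) (n:ℤ), u k * g k := by
    rw [Finset.sum_neg_distrib]
  linarith [h1, h2.symm ▸ h1]

lemma SA_cos_sum_full (N : ℕ) (hN : 0 < N) (c : ℤ) (hc2 : |c| < N) :
    ∑ j ∈ Finset.range N, Real.cos ((c:ℝ)*(2*j+1)*π/N) = if c = 0 then (N:ℝ) else 0 := by
  split_ifs with h
  · subst h
    have : ∀ j ∈ Finset.range N, Real.cos (((0:ℤ):ℝ)*(2*j+1)*π/N) = 1 := by
      intro j _
      norm_num
    rw [Finset.sum_congr rfl this]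
    simp
  · exact SA_cos_sum N hN c h hc2

/-- Main algebraic extraction: node values force `u` constant. -/
lemma SA_extract (n : ℕ) (hn : 1 ≤ n) (u : ℤ → ℝ)
    (hsymm : ∀ k : ℤ, u (-k) = u k)
    (hnorm : ∑ k ∈ Finset.Icc (-(n : ℤ)) (n : ℤ), u k = 1)
    (hGnode : ∀ j < 2*n+1,
      |∑ k ∈ Finset.Icc (-(n:ℤ)) (n:ℤ), u k * Real.sin ((2*(k:ℝ)+1) * SAphi (2*n+1) j)|
        ≤ 1/(2*(n:ℝ)+1)) :
    ∀ k : ℤ, |k| ≤ (n : ℤ) → u k = 1 / (2 * (n : ℝ) + 1) := by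
  have hNrpos : (0:ℝ) < 2*(n:ℝ)+1 := by positivity
  set Nr : ℝ := 2*(n:ℝ)+1 with hNr
  set K := Finset.Icc (-(n:ℤ)) (n:ℤ) with hK
  set N : ℕ := 2*n+1 with hNdef
  set G : ℕ → ℝ := fun j => ∑ k ∈ K, u k * Real.sin ((2*(k:ℝ)+1) * SAphi N j) with hG
  have hsin2pos : ∀ j, j < N → 0 < (Real.sin (SAphi N j))^2 := by
    intro j hj
    exact pow_pos (SA_sin_phi_pos j hj) 2
  -- Step 1a
  have hsum1 : ∑ j ∈ Finset.range N, (-1:ℝ)^j * G j / (Real.sin (SAphi N j))^2 = Nr := by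
    have h1 : ∀ j ∈ Finset.range N, (-1:ℝ)^j * G j / (Real.sin (SAphi N j))^2
        = ∑ k ∈ K, u k * ((-1:ℝ)^j * Real.sin ((2*(k:ℝ)+1) * SAphi N j)
            / (Real.sin (SAphi N j))^2) := by
      intro j _
      rw [hG]
      simp only
      rw [Finset.mul_sum, Finset.sum_div]
      apply Finset.sum_congr rfl
      intro k _
      ring
    rw [Finset.sum_congr rfl h1, Finset.sum_comm]
    have h2 : ∀ k ∈ K, (∑ j ∈ Finset.range N, u k * ((-1:ℝ)^j
        * Real.sin ((2*(k:ℝ)+1) * SAphi N j) / (Real.sin (SAphi N j))^2))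
        = u k * ((2*(k:ℝ)+1)*Nr) := by
      intro k hk
      rw [← Finset.mul_sum]
      congr 1
      have hkK : |k| ≤ (n:ℤ) := by
        rw [hK] at hk
        simp only [Finset.mem_Icc] at hk
        rw [abs_le]
        exact hk
      rw [← SAA_val n hn k hkK, SAA]
    rw [Finset.sum_congr rfl h2]
    have h3 : ∀ k ∈ K, u k * ((2*(k:ℝ)+1)*Nr) = Nr * u k + (2*Nr) * (u k * (k:ℝ)) := by
      intro k _
      ring
    rw [Finset.sum_congr rfl h3, Finset.sum_add_distrib, ← Finset.mul_sum, ← Finset.mul_sum]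
    rw [hK] at *
    rw [hnorm]
    rw [SA_odd_sum n u hsymm (fun k => (k:ℝ)) (by intro k; push_cast; ring)]
    ring
  -- Step 1bcd
  have hGval : ∀ j ∈ Finset.range N, G j = (-1:ℝ)^j * (1/Nr) := by
    have hterm0 : ∀ j ∈ Finset.range N,
        0 ≤ (1/Nr) * (1/(Real.sin (SAphi N j))^2)
            - (-1:ℝ)^j * G j / (Real.sin (SAphi N j))^2 := by
      intro j hj
      have hj' : j < N := Finset.mem_range.mp hj
      have habs : (-1:ℝ)^j * G j ≤ 1/Nr := by
        have h1 : (-1:ℝ)^j * G j ≤ |(-1:ℝ)^j * G j| := le_abs_self _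
        have h2 : |(-1:ℝ)^j * G j| = |G j| := by
          rw [abs_mul, abs_pow, abs_neg, abs_one, one_pow, one_mul]
        have h3 := hGnode j hj'
        rw [h2] at h1
        exact h1.trans (h3.trans (le_of_eq rfl))
      have hs2 := hsin2pos j hj'
      rw [sub_nonneg, show (1/Nr) * (1/(Real.sin (SAphi N j))^2)
        = (1/Nr) / (Real.sin (SAphi N j))^2 by ring]
      exact (div_le_div_iff_of_pos_right hs2).mpr habs
    have hsumt : ∑ j ∈ Finset.range N, ((1/Nr) * (1/(Real.sin (SAphi N j))^2)
        - (-1:ℝ)^j * G j / (Real.sin (SAphi N j))^2) = 0 := by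
      rw [Finset.sum_sub_distrib, ← Finset.mul_sum, hsum1, SA_sum_invsin2 n hn]
      field_simp
      rw [hNr]; ring
    have hzero := (Finset.sum_eq_zero_iff_of_nonneg hterm0).mp hsumt
    intro j hj
    have hj' : j < N := Finset.mem_range.mp hj
    have h := hzero j hj
    have hs2 := (hsin2pos j hj').ne'
    have h4 : (-1:ℝ)^j * G j = 1/Nr := by
      have h' : ((-1:ℝ)^j * G j) / (Real.sin (SAphi N j))^2
          = (1/Nr) / (Real.sin (SAphi N j))^2 := by
        have hA : (1/Nr) * (1/(Real.sin (SAphi N j))^2)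
            = (1/Nr)/(Real.sin (SAphi N j))^2 := by ring
        linarith [h]
      have h'' := congrArg (fun x : ℝ => x * (Real.sin (SAphi N j))^2) h'
      simpa [div_mul_cancel₀, hs2] using h''
    have h5 : ((-1:ℝ)^j) * ((-1:ℝ)^j * G j) = ((-1:ℝ)^j) * (1/Nr) := by rw [h4]
    calc G j = ((-1:ℝ)^j) * ((-1:ℝ)^j * G j) := by
          rw [← mul_assoc, ← pow_add, ← two_mul, pow_mul]
          norm_num
      _ = (-1:ℝ)^j * (1/Nr) := h5
  -- Step 2: consecutive equality
  have hstep : ∀ m : ℕ, m + 1 ≤ n → u (m:ℤ) = u ((m:ℤ)+1) := by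
    intro m hm
    -- X via node values
    have hX1 : ∑ j ∈ Finset.range N, Real.sin ((2*(m:ℝ)+1) * SAphi N j) * G j = 0 := by
      have h1 : ∀ j ∈ Finset.range N, Real.sin ((2*(m:ℝ)+1) * SAphi N j) * G j
          = (1/Nr) * ((-1:ℝ)^j * Real.sin ((2*((((m:ℤ)+1 : ℤ)):ℝ)-1) * SAphi N j)) := by
        intro j hj
        rw [hGval j hj]
        have : (2*((((m:ℤ)+1 : ℤ)):ℝ)-1) = 2*(m:ℝ)+1 := by push_cast; ring
        rw [this]
        ring
      rw [Finset.sum_congr rfl h1, ← Finset.mul_sum]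
      have h2 : ∑ j ∈ Finset.range N, (-1:ℝ)^j
          * Real.sin ((2*((((m:ℤ)+1 : ℤ)):ℝ)-1) * SAphi N j) = SAE n ((m:ℤ)+1) := rfl
      rw [h2, SAE_zero n hn ((m:ℤ)+1) (by omega) (by omega)]
      ring
    -- X via swap
    have hX2 : ∑ j ∈ Finset.range N, Real.sin ((2*(m:ℝ)+1) * SAphi N j) * G j
        = u (m:ℤ) * (Nr/2) - u (-(m:ℤ)-1) * (Nr/2) := by
      have h1 : ∀ j ∈ Finset.range N, Real.sin ((2*(m:ℝ)+1) * SAphi N j) * G j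
          = ∑ k ∈ K, u k * (Real.sin ((2*(k:ℝ)+1) * SAphi N j)
              * Real.sin ((2*(m:ℝ)+1) * SAphi N j)) := by
        intro j _
        rw [hG]
        simp only
        rw [Finset.mul_sum]
        apply Finset.sum_congr rfl
        intro k _
        ring
      rw [Finset.sum_congr rfl h1, Finset.sum_comm]
      have hP : ∀ k ∈ K, ∑ j ∈ Finset.range N,
          u k * (Real.sin ((2*(k:ℝ)+1) * SAphi N j) * Real.sin ((2*(m:ℝ)+1) * SAphi N j))
          = (if k = (m:ℤ) then u k * (Nr/2) else 0)
            - (if k = -(m:ℤ)-1 then u k * (Nr/2) else 0) := by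
        intro k hk
        have hkK : -(n:ℤ) ≤ k ∧ k ≤ (n:ℤ) := by
          rw [hK] at hk; simpa using hk
        rw [← Finset.mul_sum]
        have hprod : ∀ j ∈ Finset.range N,
            Real.sin ((2*(k:ℝ)+1) * SAphi N j) * Real.sin ((2*(m:ℝ)+1) * SAphi N j)
            = (Real.cos (((k - (m:ℤ) : ℤ):ℝ)*(2*j+1)*π/N)
              - Real.cos (((k + (m:ℤ) + 1 : ℤ):ℝ)*(2*j+1)*π/N))/2 := by
          intro j _
          have h2 := Real.two_mul_sin_mul_sin ((2*(k:ℝ)+1) * SAphi N j)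
            ((2*(m:ℝ)+1) * SAphi N j)
          have hNR : ((N:ℕ):ℝ) ≠ 0 := by
            rw [hNdef]; positivity
          have e1 : (2*(k:ℝ)+1) * SAphi N j - (2*(m:ℝ)+1) * SAphi N j
              = ((k - (m:ℤ) : ℤ):ℝ)*(2*j+1)*π/N := by
            unfold SAphi; push_cast; field_simp; ring
          have e2 : (2*(k:ℝ)+1) * SAphi N j + (2*(m:ℝ)+1) * SAphi N j
              = ((k + (m:ℤ) + 1 : ℤ):ℝ)*(2*j+1)*π/N := by
            unfold SAphi; push_cast; field_simp; ring
          rw [e1, e2] at h2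
          linarith [h2]
        rw [Finset.sum_congr rfl hprod, ← Finset.sum_div, Finset.sum_sub_distrib]
        have hNpos : 0 < N := by omega
        have hc1 := SA_cos_sum_full N hNpos (k - (m:ℤ)) (by rw [abs_lt]; push_cast; omega)
        have hc2 := SA_cos_sum_full N hNpos (k + (m:ℤ) + 1) (by rw [abs_lt]; push_cast; omega)
        rw [hc1, hc2]
        have hNrN : ((N:ℕ):ℝ) = Nr := by rw [hNdef, hNr]; push_cast; ring
        by_cases p1 : k = (m:ℤ)
        · by_cases p2 : k = -(m:ℤ)-1
          · exfalso; omega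
          · rw [if_pos p1, if_neg p2, if_pos (by omega : k - (m:ℤ) = 0),
              if_neg (by omega : ¬(k + (m:ℤ) + 1 = 0)), hNrN]
            ring
        · by_cases p2 : k = -(m:ℤ)-1
          · rw [if_neg p1, if_pos p2, if_neg (by omega : ¬(k - (m:ℤ) = 0)),
              if_pos (by omega : k + (m:ℤ) + 1 = 0), hNrN]
            ring
          · rw [if_neg p1, if_neg p2, if_neg (by omega : ¬(k - (m:ℤ) = 0)),
              if_neg (by omega : ¬(k + (m:ℤ) + 1 = 0))]
            ring
      rw [Finset.sum_congr rfl hP, Finset.sum_sub_distrib,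
        Finset.sum_ite_eq' K ((m:ℤ)) (fun k => u k * (Nr/2)),
        Finset.sum_ite_eq' K (-(m:ℤ)-1) (fun k => u k * (Nr/2)),
        if_pos (by rw [hK]; simp only [Finset.mem_Icc]; omega),
        if_pos (by rw [hK]; simp only [Finset.mem_Icc]; omega)]
    -- combine
    have hm1 : u (-(m:ℤ)-1) = u ((m:ℤ)+1) := by
      have := hsymm ((m:ℤ)+1)
      rw [show -((m:ℤ)+1) = -(m:ℤ)-1 by ring] at this
      exact this
    rw [hX2, hm1] at hX1
    have hNr2 : Nr/2 ≠ 0 := by positivity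
    have h7 : (u (m:ℤ) - u ((m:ℤ)+1)) * (Nr/2) = 0 := by linear_combination hX1
    rcases mul_eq_zero.mp h7 with h | h
    · linarith
    · exact absurd h hNr2
  -- Step 3: chain and conclude
  have hconst : ∀ i : ℕ, i ≤ n → u (i:ℤ) = u 0 := by
    intro i
    induction i with
    | zero => intro _; norm_num
    | succ m ih =>
        intro h
        have h1 := hstep m (by omega)
        have h2 : ((m+1:ℕ):ℤ) = (m:ℤ)+1 := by push_cast; ring
        rw [h2, ← h1]
        exact ih (by omega)
  have hall : ∀ k : ℤ, |k| ≤ (n:ℤ) → u k = u 0 := by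
    intro k hk
    have hk' := abs_le.mp hk
    rcases le_or_gt 0 k with h | h
    · lift k to ℕ using h with i hi
      exact hconst i (by omega)
    · set m : ℕ := (-k).toNat with hm
      rw [show k = -((m:ℤ)) by omega, hsymm]
      exact hconst m (by omega)
  have hcard : K.card = 2*n+1 := by
    rw [hK, Int.card_Icc]
    omega
  have hsum0 : ∑ k ∈ K, u k = ((2*n+1 : ℕ):ℝ) * u 0 := by
    have h1 : ∀ k ∈ K, u k = u 0 := by
      intro k hk
      apply hall
      rw [hK] at hk
      simp only [Finset.mem_Icc] at hk
      rw [abs_le]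
      exact hk
    rw [Finset.sum_congr rfl h1, Finset.sum_const, hcard, nsmul_eq_mul]
  have hu0 : u 0 = 1/Nr := by
    rw [hK] at hsum0
    rw [hnorm] at hsum0
    have : ((2*n+1 : ℕ):ℝ) = Nr := by rw [hNr]; push_cast; ring
    rw [this] at hsum0
    field_simp at hsum0 ⊢
    linarith
  intro k hk
  rw [hall k hk, hu0]

lemma SA_sq_summable {f : ℤ → ℂ} (hf : Memℓp f 2) : Summable (fun k => ‖f k‖^2) := by
  have h := hf.summable (p := 2) (by norm_num)
  have : ∀ k : ℤ, ‖f k‖ ^ ((2:ℝ≥0∞).toReal) = ‖f k‖^2 := by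
    intro k
    rw [show ((2:ℝ≥0∞).toReal) = ((2:ℕ):ℝ) by simp, Real.rpow_natCast]
  simpa [this] using h

lemma SA_memlp_of_finite {f : ℤ → ℂ} (s : Finset ℤ) (h : ∀ k ∉ s, f k = 0) : Memℓp f 2 := by
  apply memℓp_gen
  apply summable_of_ne_finset_zero (s := s)
  intro k hk
  rw [h k hk]
  simp [Real.zero_rpow]

lemma SA_l2norm_pos {f : ℤ → ℂ} (hf : Memℓp f 2) (hf0 : f ≠ 0) : 0 < l2norm f := by
  rw [l2norm, Real.sqrt_pos]
  obtain ⟨k, hk⟩ := Function.ne_iff.mp hf0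
  have hsum := SA_sq_summable hf
  have h2 : (0:ℝ) < ‖f k‖^2 := by
    have h3 : 0 < ‖f k‖ := norm_pos_iff.mpr hk
    positivity
  calc (0:ℝ) < ‖f k‖^2 := h2
    _ ≤ ∑' k, ‖f k‖^2 := Summable.le_tsum hsum k (fun j _ => by positivity)

lemma SA_op_bound (n : ℕ) (u : ℤ → ℝ)
    (heq : sSup {r : ℝ | ∃ f : ℤ → ℂ, Memℓp f 2 ∧ f ≠ 0 ∧
        r = l2norm (dgrad (conv u f)) / l2norm f} = 2 / (2 * (n : ℝ) + 1)) :
    ∀ f : ℤ → ℂ, Memℓp f 2 → f ≠ 0 →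
      l2norm (dgrad (conv u f)) ≤ 2 / (2*(n:ℝ)+1) * l2norm f := by
  intro f hf hf0
  set S := {r : ℝ | ∃ f : ℤ → ℂ, Memℓp f 2 ∧ f ≠ 0 ∧
      r = l2norm (dgrad (conv u f)) / l2norm f} with hS
  have hbdd : BddAbove S := by
    by_contra h
    rw [Real.sSup_of_not_bddAbove h] at heq
    have hpos : (0:ℝ) < 2 / (2*(n:ℝ)+1) := by positivity
    linarith
  have hmem : l2norm (dgrad (conv u f)) / l2norm f ∈ S := ⟨f, hf, hf0, rfl⟩
  have hle := le_csSup hbdd hmem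
  rw [heq] at hle
  have hpos := SA_l2norm_pos hf hf0
  calc l2norm (dgrad (conv u f))
      = (l2norm (dgrad (conv u f)) / l2norm f) * l2norm f := by
        field_simp
    _ ≤ 2 / (2*(n:ℝ)+1) * l2norm f := mul_le_mul_of_nonneg_right hle hpos.le

noncomputable def SAe (x : ℝ) : ℂ := Complex.exp ((x:ℂ) * Complex.I)

lemma SAe_add (a b : ℝ) : SAe (a+b) = SAe a * SAe b := by
  rw [SAe, SAe, SAe, ← Complex.exp_add]
  congr 1
  push_cast
  ring

lemma SAe_norm (x : ℝ) : ‖SAe x‖ = 1 := by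
  rw [SAe, Complex.norm_exp_ofReal_mul_I]

lemma SAe_zero : SAe 0 = 1 := by
  rw [SAe]
  simp

lemma SA_conv_eq (n : ℕ) (u : ℤ → ℝ) (hsupp : ∀ k : ℤ, (n : ℤ) < |k| → u k = 0)
    (g : ℤ → ℂ) (m : ℤ) :
    conv u g m = ∑ k ∈ Finset.Icc (-(n:ℤ)) (n:ℤ), (u k:ℂ) * g (m-k) := by
  rw [conv]
  apply tsum_eq_sum
  intro k hk
  have h1 : ¬(|k| ≤ (n:ℤ)) := by
    rw [abs_le]
    simpa [Finset.mem_Icc] using hk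
  rw [hsupp k (not_le.mp h1)]
  simp

lemma SA_mult_bound (n : ℕ) (hn : 1 ≤ n) (u : ℤ → ℝ)
    (hsupp : ∀ k : ℤ, (n : ℤ) < |k| → u k = 0)
    (hop : ∀ f : ℤ → ℂ, Memℓp f 2 → f ≠ 0 →
      l2norm (dgrad (conv u f)) ≤ 2 / (2*(n:ℝ)+1) * l2norm f) (θ : ℝ) :
    ‖(SAe θ - 1) * ∑ k ∈ Finset.Icc (-(n:ℤ)) (n:ℤ), (u k : ℂ) * SAe (-(k:ℝ)*θ)‖
      ≤ 2 / (2*(n:ℝ)+1) := by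
  have hNrpos : (0:ℝ) < 2*(n:ℝ)+1 := by positivity
  set Nr : ℝ := 2*(n:ℝ)+1 with hNr
  set K := Finset.Icc (-(n:ℤ)) (n:ℤ) with hK
  set W : ℂ := ∑ k ∈ K, (u k : ℂ) * SAe (-(k:ℝ)*θ) with hW
  set s : ℝ := ‖(SAe θ - 1) * W‖ with hs
  have key : ∀ M : ℕ, 2*n ≤ M → ((M:ℝ) - 2*n) * s^2 ≤ (2/Nr)^2 * ((M:ℝ)+1) := by
    intro M hM
    set f : ℤ → ℂ := fun m => if 0 ≤ m ∧ m ≤ (M:ℤ) then SAe ((m:ℝ)*θ) else 0 with hf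
    have hfin : ∀ m ∉ Finset.Icc (0:ℤ) (M:ℤ), f m = 0 := by
      intro m hm
      simp only [Finset.mem_Icc, not_and_or, not_le] at hm
      rw [hf]
      simp only
      exact if_neg (by omega)
    have hmem : Memℓp f 2 := SA_memlp_of_finite _ hfin
    have hf0 : f ≠ 0 := by
      intro h
      have h0 : f 0 = 1 := by
        rw [hf]
        simp only
        rw [if_pos (by omega : (0:ℤ) ≤ 0 ∧ (0:ℤ) ≤ (M:ℤ))]
        norm_num
        exact SAe_zero
      rw [h] at h0
      simp at h0
    have hl2f : l2norm f = Real.sqrt ((M:ℝ)+1) := by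
      rw [l2norm]
      congr 1
      rw [tsum_eq_sum (s := Finset.Icc (0:ℤ) (M:ℤ))
        (fun m hm => by rw [hfin m hm]; simp)]
      have h1 : ∀ m ∈ Finset.Icc (0:ℤ) (M:ℤ), ‖f m‖^2 = 1 := by
        intro m hm
        simp only [Finset.mem_Icc] at hm
        rw [hf]
        simp only
        rw [if_pos (by omega), SAe_norm]
        norm_num
      rw [Finset.sum_congr rfl h1, Finset.sum_const, Int.card_Icc]
      have h2 : ((M:ℤ)+1-0).toNat = M+1 := by omega
      rw [h2]
      push_cast
      simp
    have hconvI : ∀ m : ℤ, (n:ℤ) ≤ m → m ≤ (M:ℤ)-(n:ℤ) →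
        conv u f m = SAe ((m:ℝ)*θ) * W := by
      intro m h1 h2
      rw [SA_conv_eq n u hsupp f m, hW, Finset.mul_sum]
      apply Finset.sum_congr rfl
      intro k hk
      simp only [hK, Finset.mem_Icc] at hk
      have hfval : f (m-k) = SAe (((m-k:ℤ):ℝ)*θ) := by
        rw [hf]
        simp only
        rw [if_pos (by omega)]
      rw [hfval, show ((m-k:ℤ):ℝ)*θ = (m:ℝ)*θ + (-(k:ℝ)*θ) by push_cast; ring, SAe_add]
      ring
    have hconv0 : ∀ m : ℤ, m < -(n:ℤ) ∨ (M:ℤ)+(n:ℤ) < m → conv u f m = 0 := by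
      intro m hm
      rw [SA_conv_eq n u hsupp f m]
      apply Finset.sum_eq_zero
      intro k hk
      simp only [Finset.mem_Icc] at hk
      rw [hf]
      simp only
      rw [if_neg (by omega), mul_zero]
    have hdgI : ∀ m : ℤ, (n:ℤ) ≤ m → m ≤ (M:ℤ)-(n:ℤ)-1 →
        ‖dgrad (conv u f) m‖ = s := by
      intro m h1 h2
      show ‖conv u f (m+1) - conv u f m‖ = s
      rw [hconvI (m+1) (by omega) (by omega), hconvI m h1 (by omega)]
      rw [show (((m+1:ℤ)):ℝ)*θ = (m:ℝ)*θ + θ by push_cast; ring, SAe_add]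
      rw [show SAe ((m:ℝ)*θ) * SAe θ * W - SAe ((m:ℝ)*θ) * W
        = SAe ((m:ℝ)*θ) * ((SAe θ - 1) * W) by ring]
      rw [norm_mul, SAe_norm, one_mul, hs]
    have hdg0 : ∀ m ∉ Finset.Icc (-(n:ℤ)-1) ((M:ℤ)+(n:ℤ)), dgrad (conv u f) m = 0 := by
      intro m hm
      simp only [Finset.mem_Icc, not_and_or, not_le] at hm
      show conv u f (m+1) - conv u f m = 0
      rcases hm with h | h
      · rw [hconv0 (m+1) (Or.inl (by omega)), hconv0 m (Or.inl (by omega))]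
        ring
      · rw [hconv0 (m+1) (Or.inr (by omega)), hconv0 m (Or.inr (by omega))]
        ring
    have hsumdg : Summable (fun m => ‖dgrad (conv u f) m‖^2) := by
      apply summable_of_ne_finset_zero (s := Finset.Icc (-(n:ℤ)-1) ((M:ℤ)+(n:ℤ)))
      intro m hm
      rw [hdg0 m hm]
      simp
    have hlow : ((M:ℝ)-2*n) * s^2 ≤ ∑' m, ‖dgrad (conv u f) m‖^2 := by
      have h1 : ∑ m ∈ Finset.Icc ((n:ℤ)) ((M:ℤ)-(n:ℤ)-1), ‖dgrad (conv u f) m‖^2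
          ≤ ∑' m, ‖dgrad (conv u f) m‖^2 :=
        Summable.sum_le_tsum _ (fun m _ => by positivity) hsumdg
      have h2 : ∑ m ∈ Finset.Icc ((n:ℤ)) ((M:ℤ)-(n:ℤ)-1), ‖dgrad (conv u f) m‖^2
          = ((M:ℝ)-2*n) * s^2 := by
        have h3 : ∀ m ∈ Finset.Icc ((n:ℤ)) ((M:ℤ)-(n:ℤ)-1), ‖dgrad (conv u f) m‖^2 = s^2 := by
          intro m hm
          simp only [Finset.mem_Icc] at hm
          rw [hdgI m hm.1 hm.2]
        rw [Finset.sum_congr rfl h3, Finset.sum_const, Int.card_Icc]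
        have h4 : ((M:ℤ)-(n:ℤ)-1+1-(n:ℤ)).toNat = M - 2*n := by omega
        rw [h4, nsmul_eq_mul, Nat.cast_sub hM]
        push_cast
        ring
      linarith
    have hup : ∑' m, ‖dgrad (conv u f) m‖^2 ≤ (2/Nr)^2 * ((M:ℝ)+1) := by
      have h1 := hop f hmem hf0
      rw [hl2f] at h1
      have h2 : l2norm (dgrad (conv u f)) ^2 = ∑' m, ‖dgrad (conv u f) m‖^2 := by
        rw [l2norm, Real.sq_sqrt (tsum_nonneg (fun m => by positivity))]
      have h3 : l2norm (dgrad (conv u f)) ^2 ≤ (2/Nr * Real.sqrt ((M:ℝ)+1))^2 := by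
        apply pow_le_pow_left₀ (Real.sqrt_nonneg _)
        exact h1
      rw [h2] at h3
      calc ∑' m, ‖dgrad (conv u f) m‖^2 ≤ (2/Nr * Real.sqrt ((M:ℝ)+1))^2 := h3
        _ = (2/Nr)^2 * ((M:ℝ)+1) := by
            rw [mul_pow, Real.sq_sqrt (by positivity)]
    linarith
  by_contra hcon
  push_neg at hcon
  have h0 : (0:ℝ) ≤ 2/Nr := by positivity
  have hs2 : (2/Nr)^2 < s^2 := by nlinarith
  set ε : ℝ := s^2 - (2/Nr)^2 with hε
  have hεpos : 0 < ε := by rw [hε]; linarith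
  obtain ⟨M, hM⟩ := exists_nat_gt ((2*(n:ℝ)*s^2 + (2/Nr)^2)/ε + 2*(n:ℝ))
  have hq : 0 ≤ (2*(n:ℝ)*s^2 + (2/Nr)^2)/ε := by positivity
  have hM2 : 2*n ≤ M := by
    have h5 : (2*(n:ℝ)*(1:ℝ)) ≤ (M:ℝ) := by push_cast; linarith
    exact_mod_cast (by push_cast; linarith : ((2*n : ℕ):ℝ) ≤ (M:ℝ))
  have hkey := key M hM2
  have h6 : (2*(n:ℝ)*s^2 + (2/Nr)^2)/ε < M := by linarith
  have h7 : (2*(n:ℝ)*s^2 + (2/Nr)^2) < M * ε := by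
    calc (2*(n:ℝ)*s^2 + (2/Nr)^2) = ((2*(n:ℝ)*s^2 + (2/Nr)^2)/ε)*ε := by field_simp
      _ < M*ε := mul_lt_mul_of_pos_right h6 hεpos
  have h8 : (M:ℝ)*ε = (M:ℝ)*s^2 - (M:ℝ)*(2/Nr)^2 := by rw [hε]; ring
  nlinarith [hkey, h7, h8]

lemma SA_G_bound (n : ℕ) (hn : 1 ≤ n) (u : ℤ → ℝ)
    (hsupp : ∀ k : ℤ, (n : ℤ) < |k| → u k = 0)
    (hsymm : ∀ k : ℤ, u (-k) = u k)
    (hop : ∀ f : ℤ → ℂ, Memℓp f 2 → f ≠ 0 →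
      l2norm (dgrad (conv u f)) ≤ 2 / (2*(n:ℝ)+1) * l2norm f) (φ : ℝ) :
    |∑ k ∈ Finset.Icc (-(n:ℤ)) (n:ℤ), u k * Real.sin ((2*(k:ℝ)+1)*φ)|
      ≤ 1/(2*(n:ℝ)+1) := by
  have hNrpos : (0:ℝ) < 2*(n:ℝ)+1 := by positivity
  set Nr : ℝ := 2*(n:ℝ)+1 with hNr
  set K := Finset.Icc (-(n:ℤ)) (n:ℤ) with hK
  set w : ℝ := ∑ k ∈ K, u k * Real.cos (2*(k:ℝ)*φ) with hw
  have hWreal : ∑ k ∈ K, (u k:ℂ) * SAe (-(k:ℝ)*(2*φ)) = ((w:ℝ):ℂ) := by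
    have hterm : ∀ k ∈ K, (u k:ℂ) * SAe (-(k:ℝ)*(2*φ))
        = ((u k * Real.cos (2*(k:ℝ)*φ) : ℝ):ℂ)
          + ((u k * (-Real.sin (2*(k:ℝ)*φ)) : ℝ):ℂ)*Complex.I := by
      intro k _
      rw [SAe, Complex.exp_mul_I]
      rw [show ((-(k:ℝ)*(2*φ) : ℝ):ℂ) = ((-(2*(k:ℝ)*φ) : ℝ):ℂ) by push_cast; ring]
      rw [← Complex.ofReal_cos, ← Complex.ofReal_sin, Real.cos_neg, Real.sin_neg]
      push_cast
      ring
    rw [Finset.sum_congr rfl hterm, Finset.sum_add_distrib, ← Complex.ofReal_sum]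
    have h2 : ∑ k ∈ K, ((u k * (-Real.sin (2*(k:ℝ)*φ)) : ℝ):ℂ)*Complex.I
        = ((∑ k ∈ K, u k * (-Real.sin (2*(k:ℝ)*φ)) : ℝ):ℂ)*Complex.I := by
      rw [← Finset.sum_mul, ← Complex.ofReal_sum]
    rw [h2]
    have h3 : ∑ k ∈ K, u k * (-Real.sin (2*(k:ℝ)*φ)) = 0 := by
      rw [hK]
      apply SA_odd_sum n u hsymm (fun k => -Real.sin (2*(k:ℝ)*φ))
      intro k
      push_cast
      rw [show 2*(-(k:ℝ))*φ = -(2*(k:ℝ)*φ) by ring, Real.sin_neg]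
    rw [h3]
    simp [hw]
  have hmb := SA_mult_bound n hn u hsupp hop (2*φ)
  rw [show Finset.Icc (-(n:ℤ)) (n:ℤ) = K from rfl] at hmb
  rw [hWreal] at hmb
  have hfac : SAe (2*φ) - 1 = SAe φ * (((2*Real.sin φ : ℝ):ℂ) * Complex.I) := by
    have h1 : SAe φ * SAe (-φ) = 1 := by
      rw [← SAe_add, show φ + -φ = (0:ℝ) by ring, SAe_zero]
    have h2 : SAe φ - SAe (-φ) = ((2*Real.sin φ : ℝ):ℂ) * Complex.I := by
      rw [SAe, SAe, Complex.exp_mul_I, Complex.exp_mul_I]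
      rw [← Complex.ofReal_cos, ← Complex.ofReal_sin]
      rw [show ((-φ:ℝ):ℂ) = -((φ:ℝ):ℂ) by push_cast; ring]
      rw [Complex.cos_neg, Complex.sin_neg, ← Complex.ofReal_cos, ← Complex.ofReal_sin]
      push_cast
      ring
    calc SAe (2*φ) - 1 = SAe φ * (SAe φ - SAe (-φ)) := by
          rw [mul_sub, h1, ← SAe_add, show φ + φ = 2*φ by ring]
      _ = SAe φ * (((2*Real.sin φ : ℝ):ℂ) * Complex.I) := by rw [h2]
  rw [hfac] at hmb
  rw [mul_assoc, norm_mul, SAe_norm, one_mul, mul_assoc, norm_mul, norm_mul,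
    Complex.norm_I, Complex.norm_real, Complex.norm_real] at hmb
  -- hmb : |2 sinφ| * (1 * |w|) ≤ 2/Nr  (roughly)
  have hGid : ∑ k ∈ K, u k * Real.sin ((2*(k:ℝ)+1)*φ) = Real.sin φ * w := by
    have hterm : ∀ k ∈ K, u k * Real.sin ((2*(k:ℝ)+1)*φ)
        = Real.cos φ * (u k * Real.sin (2*(k:ℝ)*φ))
          + Real.sin φ * (u k * Real.cos (2*(k:ℝ)*φ)) := by
      intro k _
      rw [show (2*(k:ℝ)+1)*φ = 2*(k:ℝ)*φ + φ by ring, Real.sin_add]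
      ring
    rw [Finset.sum_congr rfl hterm, Finset.sum_add_distrib, ← Finset.mul_sum, ← Finset.mul_sum]
    have h3 : ∑ k ∈ K, u k * Real.sin (2*(k:ℝ)*φ) = 0 := by
      rw [hK]
      apply SA_odd_sum n u hsymm (fun k => Real.sin (2*(k:ℝ)*φ))
      intro k
      push_cast
      rw [show 2*(-(k:ℝ))*φ = -(2*(k:ℝ)*φ) by ring, Real.sin_neg]
    rw [h3, hw]
    ring
  rw [hGid, abs_mul]
  have habs2 : ‖(2*Real.sin φ : ℝ)‖ = 2*|Real.sin φ| := by
    rw [Real.norm_eq_abs, abs_mul, abs_two]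
  rw [habs2] at hmb
  have hwnorm : ‖w‖ = |w| := Real.norm_eq_abs w
  rw [hwnorm] at hmb
  rw [← hNr] at hmb
  have h9 : 2*(1/Nr) = 2/Nr := by ring
  linarith [hmb]

end SAhelpers

theorem smoothest_average_first_derivative_equality_case
    (n : ℕ) (hn : 1 ≤ n) (u : ℤ → ℝ)
    (hsupp : ∀ k : ℤ, (n : ℤ) < |k| → u k = 0)
    (hsymm : ∀ k : ℤ, u (-k) = u k)
    (hnorm : ∑ k ∈ Finset.Icc (-(n : ℤ)) (n : ℤ), u k = 1)
    (heq : sSup {r : ℝ | ∃ f : ℤ → ℂ, Memℓp f 2 ∧ f ≠ 0 ∧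
        r = l2norm (dgrad (conv u f)) / l2norm f} = 2 / (2 * (n : ℝ) + 1)) :
    ∀ k : ℤ, |k| ≤ (n : ℤ) → u k = 1 / (2 * (n : ℝ) + 1) := by
  have hop := SA_op_bound n u heq
  have hGnode : ∀ j < 2*n+1,
      |∑ k ∈ Finset.Icc (-(n:ℤ)) (n:ℤ),
        u k * Real.sin ((2*(k:ℝ)+1) * SAphi (2*n+1) j)| ≤ 1/(2*(n:ℝ)+1) :=
    fun j _ => SA_G_bound n hn u hsupp hsymm hop (SAphi (2*n+1) j)
  exact SA_extract n hn u hsymm hnorm hGnode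
end

section
/- Let n be a positive integer and let p be a monic real polynomial of degree n. Then max_{x ∈ [-1,1]} |p(x)| ≥ 2^{1-n}, and equality holds if and only if p(x) = 2^{1-n}·T_n(x), where T_n is the n-th Chebyshev polynomial of the first kind. -/
open Polynomial

namespace ChebAux

open Real Set Finset

lemma T_coeff_aux : ∀ k : ℕ, (Chebyshev.T ℝ (k : ℤ)).natDegree ≤ k ∧
    (Chebyshev.T ℝ (k : ℤ)).coeff k = 2 ^ (k - 1) := by
  intro k
  induction k using Nat.strong_induction_on with
  | _ k ih =>
    match k with
    | 0 => simp [Polynomial.Chebyshev.T_zero]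
    | 1 => simp [Polynomial.Chebyshev.T_one]
    | (m + 2) =>
      have hc2 : ((m + 2 : ℕ) : ℤ) = (m : ℤ) + 2 := by push_cast; ring
      have hc1 : ((m + 1 : ℕ) : ℤ) = (m : ℤ) + 1 := by push_cast; ring
      have heq : Chebyshev.T ℝ ((m + 2 : ℕ) : ℤ) =
          2 * X * Chebyshev.T ℝ ((m + 1 : ℕ) : ℤ) - Chebyshev.T ℝ (m : ℤ) := by
        rw [hc2, hc1, Polynomial.Chebyshev.T_add_two]
      obtain ⟨hd1, hcf1⟩ := ih (m + 1) (by omega)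
      obtain ⟨hd0, _⟩ := ih m (by omega)
      have h2X : ((2 : ℝ[X]) * X).natDegree ≤ 1 := by
        refine natDegree_mul_le.trans ?_
        simp
      constructor
      · rw [heq]
        refine (natDegree_sub_le _ _).trans ?_
        have h1 : ((2 : ℝ[X]) * X * Chebyshev.T ℝ ((m + 1 : ℕ) : ℤ)).natDegree ≤ m + 2 := by
          refine natDegree_mul_le.trans ?_
          omega
        omega
      · rw [heq, coeff_sub, coeff_eq_zero_of_natDegree_lt (by omega : (Chebyshev.T ℝ (m : ℤ)).natDegree < m + 2)]
        have h2C : (2 : ℝ[X]) = C 2 := (map_ofNat C 2).symm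
        rw [h2C, mul_assoc, coeff_C_mul, coeff_X_mul, hcf1]
        rw [show m + 2 - 1 = (m + 1 - 1) + 1 by omega, pow_succ]
        ring

lemma T_natDegree (k : ℕ) : (Chebyshev.T ℝ (k : ℤ)).natDegree = k := by
  refine le_antisymm (T_coeff_aux k).1 (le_natDegree_of_ne_zero ?_)
  rw [(T_coeff_aux k).2]
  positivity

lemma T_leadingCoeff (k : ℕ) : (Chebyshev.T ℝ (k : ℤ)).leadingCoeff = 2 ^ (k - 1) := by
  rw [leadingCoeff, T_natDegree, (T_coeff_aux k).2]

lemma exists_root_Ioo (r : ℝ[X]) {a b : ℝ} (hab : a < b)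
    (h : r.eval a * r.eval b < 0) : ∃ z ∈ Set.Ioo a b, r.eval z = 0 := by
  have hc : ContinuousOn (fun x => r.eval x) (Set.Icc a b) :=
    (r.continuous).continuousOn
  rcases mul_neg_iff.mp h with ⟨h1, h2⟩ | ⟨h1, h2⟩
  · obtain ⟨z, hz, hz0⟩ := intermediate_value_Ioo' hab.le hc (Set.mem_Ioo.mpr ⟨h2, h1⟩)
    exact ⟨z, hz, hz0⟩
  · obtain ⟨z, hz, hz0⟩ := intermediate_value_Ioo hab.le hc (Set.mem_Ioo.mpr ⟨h1, h2⟩)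
    exact ⟨z, hz, hz0⟩


lemma alternation (n : ℕ) (hn : 1 ≤ n) (r : ℝ[X]) (hdeg : r.natDegree < n) (y : ℕ → ℝ)
    (hy : ∀ j k, j < k → k ≤ n → y j < y k)
    (hsign : ∀ j, j < n → r.eval (y j) * r.eval (y (j + 1)) ≤ 0)
    (hderiv : ∀ j, 0 < j → j < n → r.eval (y j) = 0 → r.derivative.eval (y j) = 0) :
    r = 0 := by
  classical
  by_contra hr
  have hgap : ∀ k : ℕ, ∃ z : ℝ, k < n →
      r.eval z = 0 ∧ y k ≤ z ∧ z ≤ y (k + 1) := by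
    intro k
    by_cases hk : k < n
    · have hlt : y k < y (k + 1) := hy k (k + 1) (Nat.lt_succ_self k) hk
      by_cases h0 : r.eval (y k) = 0
      · exact ⟨y k, fun _ => ⟨h0, le_rfl, hlt.le⟩⟩
      by_cases h1 : r.eval (y (k + 1)) = 0
      · exact ⟨y (k + 1), fun _ => ⟨h1, hlt.le, le_rfl⟩⟩
      have hne : r.eval (y k) * r.eval (y (k + 1)) < 0 :=
        (hsign k hk).lt_of_ne (mul_ne_zero h0 h1)
      obtain ⟨z, hz, hz0⟩ := exists_root_Ioo r hlt hne
      exact ⟨z, fun _ => ⟨hz0, hz.1.le, hz.2.le⟩⟩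
    · exact ⟨0, fun h => absurd h hk⟩
  choose g hg using hgap
  set S : Finset ℝ := (Finset.range n).image g with hS
  have hmem : ∀ k ∈ Finset.range n, g k ∈ S := fun k hk => Finset.mem_image_of_mem g hk
  have hcard := Finset.card_eq_sum_card_fiberwise hmem
  have hfib : ∀ a ∈ S, ((Finset.range n).filter (fun k => g k = a)).card ≤
      Polynomial.rootMultiplicity a r := by
    intro a ha
    set F := (Finset.range n).filter (fun k => g k = a) with hF
    have hFmem : ∀ k ∈ F, k < n ∧ g k = a := by
      intro k hk
      rw [hF, Finset.mem_filter, Finset.mem_range] at hk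
      exact hk
    rcases Finset.eq_empty_or_nonempty F with he | ⟨k0, hk0⟩
    · simp [he]
    obtain ⟨hk0n, hk0a⟩ := hFmem k0 hk0
    have haroot : r.IsRoot a := hk0a ▸ (hg k0 hk0n).1
    have hpair : ∀ k k', k ∈ F → k' ∈ F → k < k' → k' = k + 1 ∧ a = y (k + 1) := by
      intro k k' hk hk' hlt
      obtain ⟨hkn, hka⟩ := hFmem k hk
      obtain ⟨hk'n, hk'a⟩ := hFmem k' hk'
      have h1 : a ≤ y (k + 1) := hka ▸ (hg k hkn).2.2
      have h2 : y k' ≤ a := hk'a ▸ (hg k' hk'n).2.1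
      have hk'le : k' ≤ k + 1 := by
        by_contra hcon
        push_neg at hcon
        have : y (k + 1) < y k' := hy (k + 1) k' hcon (le_of_lt hk'n)
        linarith
      have hk'eq : k' = k + 1 := le_antisymm hk'le hlt
      subst hk'eq
      exact ⟨rfl, le_antisymm h1 h2⟩
    by_cases hone : F.card ≤ 1
    · have : 0 < Polynomial.rootMultiplicity a r := (Polynomial.rootMultiplicity_pos hr).mpr haroot
      omega
    · push_neg at hone
      obtain ⟨k1, hk1, k2, hk2, hne12⟩ := Finset.one_lt_card.mp hone
      rcases lt_or_gt_of_ne hne12 with hlt | hlt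
      case _ =>
        obtain ⟨heq, hay⟩ := hpair k1 k2 hk1 hk2 hlt
        subst heq
        have hk2n : k1 + 1 < n := (hFmem _ hk2).1
        have hroot0 : r.eval (y (k1 + 1)) = 0 := hay ▸ haroot
        have hder : r.derivative.eval (y (k1 + 1)) = 0 :=
          hderiv (k1 + 1) (Nat.succ_pos k1) hk2n hroot0
        have hmult : 1 < Polynomial.rootMultiplicity a r := by
          rw [Polynomial.one_lt_rootMultiplicity_iff_isRoot hr]
          exact ⟨haroot, by rw [hay]; exact hder⟩
        have hsub : F ⊆ {k1, k1 + 1} := by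
          intro m hm
          rcases lt_trichotomy m k1 with h | h | h
          · exfalso
            have h1 := (hpair m k1 hm hk1 h).1
            have h2 := (hpair m (k1 + 1) hm hk2 (by omega)).1
            omega
          · simp [h]
          · have := (hpair k1 m hk1 hm h).1
            simp [this]
        have : F.card ≤ 2 := by
          refine (Finset.card_le_card hsub).trans ?_
          rw [Finset.card_pair (by omega)]
        omega
      case _ =>
        obtain ⟨heq, hay⟩ := hpair k2 k1 hk2 hk1 hlt
        subst heq
        have hk1n : k2 + 1 < n := (hFmem _ hk1).1
        have hroot0 : r.eval (y (k2 + 1)) = 0 := hay ▸ haroot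
        have hder : r.derivative.eval (y (k2 + 1)) = 0 :=
          hderiv (k2 + 1) (Nat.succ_pos k2) hk1n hroot0
        have hmult : 1 < Polynomial.rootMultiplicity a r := by
          rw [Polynomial.one_lt_rootMultiplicity_iff_isRoot hr]
          exact ⟨haroot, by rw [hay]; exact hder⟩
        have hsub : F ⊆ {k2, k2 + 1} := by
          intro m hm
          rcases lt_trichotomy m k2 with h | h | h
          · exfalso
            have h1 := (hpair m k2 hm hk2 h).1
            have h2 := (hpair m (k2 + 1) hm hk1 (by omega)).1
            omega
          · simp [h]
          · have := (hpair k2 m hk2 hm h).1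
            simp [this]
        have : F.card ≤ 2 := by
          refine (Finset.card_le_card hsub).trans ?_
          rw [Finset.card_pair (by omega)]
        omega
  have hsum : ∑ a ∈ S, Polynomial.rootMultiplicity a r ≤ r.natDegree := by
    have hsub : S ⊆ r.roots.toFinset := by
      intro a ha
      obtain ⟨k, hk, rfl⟩ := Finset.mem_image.mp ha
      rw [Multiset.mem_toFinset, Polynomial.mem_roots hr]
      exact (hg k (Finset.mem_range.mp hk)).1
    calc ∑ a ∈ S, Polynomial.rootMultiplicity a r
        = ∑ a ∈ S, r.roots.count a := by
          refine Finset.sum_congr rfl fun a _ => ?_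
          rw [Polynomial.count_roots]
      _ ≤ ∑ a ∈ r.roots.toFinset, r.roots.count a :=
          Finset.sum_le_sum_of_subset hsub
      _ = Multiset.card r.roots := Multiset.toFinset_sum_count_eq _
      _ ≤ r.natDegree := r.card_roots'
  have hge : n ≤ r.natDegree := by
    calc n = (Finset.range n).card := (Finset.card_range n).symm
      _ = ∑ a ∈ S, ((Finset.range n).filter (fun k => g k = a)).card := hcard
      _ ≤ ∑ a ∈ S, Polynomial.rootMultiplicity a r := Finset.sum_le_sum hfib
      _ ≤ r.natDegree := hsum
  omega

end ChebAux
theorem chebyshev_minimal_deviation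
    (n : ℕ) (hn : 1 ≤ n) (p : Polynomial ℝ)
    (hmonic : p.Monic) (hdeg : p.natDegree = n) :
    (2 : ℝ) ^ ((1 : ℤ) - (n : ℤ)) ≤
        sSup ((fun x : ℝ => |p.eval x|) '' Set.Icc (-1 : ℝ) 1) ∧
      (sSup ((fun x : ℝ => |p.eval x|) '' Set.Icc (-1 : ℝ) 1) =
          (2 : ℝ) ^ ((1 : ℤ) - (n : ℤ)) ↔
        p = Polynomial.C ((2 : ℝ) ^ ((1 : ℤ) - (n : ℤ))) *
              Polynomial.Chebyshev.T ℝ (n : ℤ)) := by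
  classical
  set c : ℝ := (2 : ℝ) ^ ((1 : ℤ) - (n : ℤ)) with hcdef
  set q : Polynomial ℝ := Polynomial.C c * Polynomial.Chebyshev.T ℝ (n : ℤ) with hqdef
  have hc0 : (0 : ℝ) < c := by rw [hcdef]; positivity
  have hTdeg := ChebAux.T_natDegree n
  have hqdeg : q.natDegree = n := by
    rw [hqdef, Polynomial.natDegree_C_mul hc0.ne', hTdeg]
  have hqmonic : q.Monic := by
    unfold Polynomial.Monic
    rw [hqdef, Polynomial.leadingCoeff_mul, Polynomial.leadingCoeff_C,
      ChebAux.T_leadingCoeff, hcdef]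
    have h1 : (2 : ℝ) ^ (n - 1) = (2 : ℝ) ^ ((n : ℤ) - 1) := by
      rw [← zpow_natCast]
      congr 1
      omega
    rw [h1, ← zpow_add₀ (by norm_num : (2 : ℝ) ≠ 0)]
    norm_num
  have habsT : ∀ x ∈ Set.Icc (-1 : ℝ) 1,
      |(Polynomial.Chebyshev.T ℝ (n : ℤ)).eval x| ≤ 1 := by
    intro x hx
    have hx' : x = Real.cos (Real.arccos x) := (Real.cos_arccos hx.1 hx.2).symm
    rw [hx', Polynomial.Chebyshev.T_real_cos]
    exact Real.abs_cos_le_one _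
  have hqabs : ∀ x ∈ Set.Icc (-1 : ℝ) 1, |q.eval x| ≤ c := by
    intro x hx
    rw [hqdef, Polynomial.eval_mul, Polynomial.eval_C, abs_mul, abs_of_pos hc0]
    exact mul_le_of_le_one_right hc0.le (habsT x hx)
  have hnpos : (0 : ℝ) < n := by
    have : (1 : ℝ) ≤ n := by exact_mod_cast hn
    linarith
  set y : ℕ → ℝ := fun j => Real.cos (((n : ℝ) - j) * Real.pi / n) with hydef
  have harg_mem : ∀ j, j ≤ n → ((n : ℝ) - j) * Real.pi / n ∈ Set.Icc 0 Real.pi := by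
    intro j hj
    have hjn : (j : ℝ) ≤ n := by exact_mod_cast hj
    have hj0 : (0 : ℝ) ≤ j := Nat.cast_nonneg j
    have hpi := Real.pi_pos
    constructor
    · have h1 : (0 : ℝ) ≤ (n : ℝ) - j := by linarith
      positivity
    · rw [div_le_iff₀ hnpos]
      nlinarith
  have hymem : ∀ j, j ≤ n → y j ∈ Set.Icc (-1 : ℝ) 1 := fun j _ =>
    ⟨Real.neg_one_le_cos _, Real.cos_le_one _⟩
  have hmono : ∀ j k, j < k → k ≤ n → y j < y k := by
    intro j k hjk hkn
    have hlt : ((n : ℝ) - k) * Real.pi / n < ((n : ℝ) - j) * Real.pi / n := by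
      have hjk' : (j : ℝ) < k := by exact_mod_cast hjk
      have hpi := Real.pi_pos
      gcongr

    exact Real.strictAntiOn_cos (harg_mem k hkn)
      (harg_mem j (le_of_lt (lt_of_lt_of_le hjk hkn))) hlt
  have hyval : ∀ j, j ≤ n →
      (Polynomial.Chebyshev.T ℝ (n : ℤ)).eval (y j) = (-1 : ℝ) ^ (n - j) := by
    intro j hj
    show (Polynomial.Chebyshev.T ℝ (n : ℤ)).eval
      (Real.cos (((n : ℝ) - j) * Real.pi / n)) = (-1 : ℝ) ^ (n - j)
    rw [Polynomial.Chebyshev.T_real_cos]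
    have hcast : ((n - j : ℕ) : ℝ) = (n : ℝ) - j := by
      push_cast [Nat.cast_sub hj]
      ring
    have harg : ((n : ℤ) : ℝ) * (((n : ℝ) - j) * Real.pi / n)
        = ((n - j : ℕ) : ℝ) * Real.pi - 0 := by
      rw [hcast, sub_zero]
      push_cast
      field_simp
    rw [harg, Real.cos_nat_mul_pi_sub, Real.cos_zero, mul_one]
  have hy0 : y 0 = -1 := by
    show Real.cos (((n : ℝ) - (0 : ℕ)) * Real.pi / n) = -1
    rw [Nat.cast_zero, sub_zero, mul_comm, mul_div_assoc, div_self hnpos.ne', mul_one,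
      Real.cos_pi]
  have hyn : y n = 1 := by
    show Real.cos (((n : ℝ) - (n : ℕ)) * Real.pi / n) = 1
    rw [sub_self, zero_mul, zero_div, Real.cos_zero]
  have hqval : ∀ j, j ≤ n → q.eval (y j) = c * (-1 : ℝ) ^ (n - j) := by
    intro j hj
    rw [hqdef, Polynomial.eval_mul, Polynomial.eval_C, hyval j hj]
  have hbdd : BddAbove ((fun x : ℝ => |p.eval x|) '' Set.Icc (-1 : ℝ) 1) :=
    ((isCompact_Icc).image_of_continuousOn
      ((p.continuous).abs.continuousOn)).bddAbove
  have hle : ∀ x ∈ Set.Icc (-1 : ℝ) 1,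
      |p.eval x| ≤ sSup ((fun x : ℝ => |p.eval x|) '' Set.Icc (-1 : ℝ) 1) :=
    fun x hx => le_csSup hbdd ⟨x, hx, rfl⟩
  have hqsup : sSup ((fun x : ℝ => |q.eval x|) '' Set.Icc (-1 : ℝ) 1) = c := by
    apply IsGreatest.csSup_eq
    constructor
    · refine ⟨1, by norm_num, ?_⟩
      show |q.eval 1| = c
      rw [← hyn, hqval n le_rfl, Nat.sub_self, pow_zero, mul_one, abs_of_pos hc0]
    · rintro v ⟨x, hx, rfl⟩
      exact hqabs x hx
  have h11 : ∀ e : ℕ, ((-1 : ℝ)) ^ e * ((-1 : ℝ)) ^ e = 1 := by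
    intro e
    rw [← mul_pow]
    norm_num
  have main : (∀ x ∈ Set.Icc (-1 : ℝ) 1, |p.eval x| ≤ c) → p = q := by
    intro hple
    set r : Polynomial ℝ := q - p with hrdef
    have hrdeg : r.natDegree < n := by
      by_cases hqp : q = p
      · rw [hrdef, hqp, sub_self]
        simpa using (by omega : 0 < n)
      · have hddeg : q.degree = p.degree := by
          rw [Polynomial.degree_eq_natDegree hqmonic.ne_zero,
            Polynomial.degree_eq_natDegree hmonic.ne_zero, hqdeg, hdeg]
        have hdlt := Polynomial.degree_sub_lt hddeg hqmonic.ne_zero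
          (by rw [hqmonic.leadingCoeff, hmonic.leadingCoeff])
        have hrne : r ≠ 0 := sub_ne_zero.mpr hqp
        have := Polynomial.natDegree_lt_natDegree hrne hdlt
        rwa [hqdeg] at this
    have hsign' : ∀ j, j ≤ n → 0 ≤ ((-1 : ℝ)) ^ (n - j) * r.eval (y j) := by
      intro j hj
      rw [hrdef, Polynomial.eval_sub, hqval j hj, mul_sub]
      have h1 : (-1 : ℝ) ^ (n - j) * (c * (-1) ^ (n - j)) = c := by
        rw [mul_comm c, ← mul_assoc, h11, one_mul]
      rw [h1]
      have habs : |(-1 : ℝ) ^ (n - j) * p.eval (y j)| ≤ c := by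
        rw [abs_mul, abs_pow, abs_neg, abs_one, one_pow, one_mul]
        exact hple (y j) (hymem j hj)
      linarith [le_of_abs_le habs]
    have hsign : ∀ j, j < n → r.eval (y j) * r.eval (y (j + 1)) ≤ 0 := by
      intro j hjn
      have h1 := hsign' j (le_of_lt hjn)
      have h2 := hsign' (j + 1) hjn
      have he : n - j = (n - (j + 1)) + 1 := by omega
      rw [he, pow_succ] at h1
      have hp := mul_nonneg h1 h2
      have hexp : ((-1 : ℝ) ^ (n - (j + 1)) * (-1) * r.eval (y j)) *
          ((-1 : ℝ) ^ (n - (j + 1)) * r.eval (y (j + 1)))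
          = -(((-1 : ℝ) ^ (n - (j + 1)) * (-1 : ℝ) ^ (n - (j + 1))) *
            (r.eval (y j) * r.eval (y (j + 1)))) := by ring
      rw [hexp, h11] at hp
      linarith
    have hderiv : ∀ j, 0 < j → j < n → r.eval (y j) = 0 →
        r.derivative.eval (y j) = 0 := by
      intro j hj0 hjn hr0
      have hj : j ≤ n := le_of_lt hjn
      have hyj1 : -1 < y j := by
        rw [← hy0]
        exact hmono 0 j hj0 hj
      have hyj2 : y j < 1 := by
        rw [← hyn]
        exact hmono j n hjn le_rfl
      have hq' := hqval j hj
      have hp' : p.eval (y j) = c * (-1 : ℝ) ^ (n - j) := by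
        have hz : q.eval (y j) - p.eval (y j) = 0 := by
          rw [← Polynomial.eval_sub]
          exact hr0
        linarith [hq']
      have hnhds : Set.Icc (-1 : ℝ) 1 ∈ nhds (y j) := Icc_mem_nhds hyj1 hyj2
      have hderu : ∀ u : Polynomial ℝ, (∀ x ∈ Set.Icc (-1 : ℝ) 1, |u.eval x| ≤ c) →
          u.eval (y j) = c * (-1 : ℝ) ^ (n - j) → u.derivative.eval (y j) = 0 := by
        intro u hub huv
        rcases Nat.even_or_odd (n - j) with hev | hod
        · have hsgn : ((-1 : ℝ)) ^ (n - j) = 1 := hev.neg_one_pow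
          have hmax : IsLocalMax (fun x => u.eval x) (y j) := by
            filter_upwards [hnhds] with x hx
            calc u.eval x ≤ |u.eval x| := le_abs_self _
              _ ≤ c := hub x hx
              _ = u.eval (y j) := by rw [huv, hsgn, mul_one]
          have hd := hmax.deriv_eq_zero
          rwa [Polynomial.deriv] at hd
        · have hsgn : ((-1 : ℝ)) ^ (n - j) = -1 := hod.neg_one_pow
          have hmin : IsLocalMin (fun x => u.eval x) (y j) := by
            filter_upwards [hnhds] with x hx
            have h1 : -c ≤ u.eval x := (abs_le.mp (hub x hx)).1
            calc u.eval (y j) = -c := by rw [huv, hsgn]; ring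
              _ ≤ u.eval x := h1
          have hd := hmin.deriv_eq_zero
          rwa [Polynomial.deriv] at hd
      have hdq := hderu q hqabs hq'
      have hdp := hderu p hple hp'
      rw [hrdef, Polynomial.derivative_sub, Polynomial.eval_sub, hdq, hdp, sub_zero]
    have hr := ChebAux.alternation n hn r hrdeg y hmono hsign hderiv
    exact (sub_eq_zero.mp hr).symm
  constructor
  · by_contra hM
    push_neg at hM
    have hple : ∀ x ∈ Set.Icc (-1 : ℝ) 1, |p.eval x| ≤ c :=
      fun x hx => (hle x hx).trans hM.le
    have hpq := main hple
    rw [hpq, hqsup] at hM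
    exact lt_irrefl c hM
  · constructor
    · intro hM
      apply main
      intro x hx
      calc |p.eval x| ≤ sSup ((fun x : ℝ => |p.eval x|) '' Set.Icc (-1 : ℝ) 1) :=
            hle x hx
        _ = c := hM
    · intro hpq
      rw [hpq]
      exact hqsup
end

section
/- Let n be a positive integer and let p be a real polynomial of degree at most n that is nonnegative on [-1,1] and satisfies p(1) = 1. Then max_{x ∈ [-1,1]} (1-x)·p(x) ≥ 2/(n+1)². -/
open Polynomial

namespace ModChebAux
open Polynomial.Chebyshev Real Finset

lemma natDegree_T_le' (k : ℕ) : (T ℝ (k:ℤ)).natDegree ≤ k := by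
  induction k using Nat.twoStepInduction with
  | zero => simp [T_zero]
  | one => simp [T_one]
  | more k h1 h2 =>
      have e : ((k+2 : ℕ) : ℤ) = (k:ℤ) + 2 := by push_cast; ring
      rw [e, T_add_two]
      refine le_trans (natDegree_sub_le _ _) (max_le ?_ (le_trans h1 (by omega)))
      refine le_trans natDegree_mul_le ?_
      have h2' : ((k:ℤ) + 1) = ((k+1 : ℕ) : ℤ) := by push_cast; ring
      rw [h2'] at *
      have hx : (2 * X : ℝ[X]).natDegree ≤ 1 :=
        le_trans natDegree_mul_le (by simp)
      omega

lemma T_eval_one' (k : ℕ) : (T ℝ (k:ℤ)).eval 1 = 1 := by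
  have := Polynomial.Chebyshev.T_real_cos (θ := 0) (n := (k:ℤ))
  simpa using this

lemma deriv_T_one (k : ℕ) : (derivative (T ℝ (k:ℤ))).eval 1 = (k:ℝ)^2 := by
  induction k using Nat.twoStepInduction with
  | zero => simp [T_zero]
  | one => simp [T_one]
  | more k h1 h2 =>
      have e : ((k+2 : ℕ) : ℤ) = (k:ℤ) + 2 := by push_cast; ring
      rw [e, T_add_two]
      have e1 : ((k:ℤ) + 1) = ((k+1 : ℕ) : ℤ) := by push_cast; ring
      rw [e1]
      have hT1 := T_eval_one' (k+1)
      simp only [derivative_sub, derivative_mul, derivative_X, derivative_ofNat, eval_sub,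
        eval_mul, eval_add, eval_X, eval_one, mul_one, eval_ofNat, eval_zero, h1, h2, hT1]
      push_cast
      ring

lemma basis_sign {m : ℕ} (v : Fin m → ℝ) (hanti : StrictAnti v) (hlt : ∀ j, v j < 1)
    (j : Fin m) :
    0 ≤ (-1)^(j:ℕ) * (Lagrange.basis Finset.univ v j).eval 1 := by
  classical
  have hbas : (Lagrange.basis Finset.univ v j).eval 1
      = ∏ k ∈ univ.erase j, (v j - v k)⁻¹ * (1 - v k) := by
    rw [Lagrange.basis, eval_prod]
    refine Finset.prod_congr rfl fun k _ => ?_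
    simp [Lagrange.basisDivisor]
  have hsgn : ((-1:ℝ))^(j:ℕ) = ∏ k ∈ univ.erase j, (if k < j then (-1:ℝ) else 1) := by
    rw [Finset.prod_ite, Finset.prod_const, Finset.prod_const_one, mul_one]
    congr 1
    have : (univ.erase j).filter (· < j) = Finset.Iio j := by
      ext k
      simp only [Finset.mem_filter, Finset.mem_erase, Finset.mem_univ, true_and,
        Finset.mem_Iio]
      exact ⟨fun h => h.2, fun h => ⟨⟨ne_of_lt h, trivial⟩, h⟩⟩
    rw [this, Fin.card_Iio]
  rw [hbas, hsgn, ← Finset.prod_mul_distrib]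
  refine Finset.prod_nonneg fun k hk => ?_
  have hkj : k ≠ j := (Finset.mem_erase.mp hk).1
  by_cases h : k < j
  · simp only [if_pos h]
    have h1 : v j < v k := hanti h
    have : (v j - v k)⁻¹ < 0 := inv_lt_zero.mpr (by linarith)
    nlinarith [hlt k]
  · simp only [if_neg h]
    have h2 : j < k := lt_of_le_of_ne (not_lt.mp h) (Ne.symm hkj)
    have h1 : v k < v j := hanti h2
    have : 0 < (v j - v k)⁻¹ := inv_pos.mpr (by linarith)
    nlinarith [hlt k]

end ModChebAux

theorem modified_chebyshev_lower_bound
    (n : ℕ) (hn : 1 ≤ n) (p : Polynomial ℝ)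
    (hdeg : p.natDegree ≤ n)
    (hnonneg : ∀ x ∈ Set.Icc (-1 : ℝ) 1, 0 ≤ p.eval x)
    (hone : p.eval 1 = 1) :
    (2 : ℝ) / ((n : ℝ) + 1) ^ 2 ≤
      sSup ((fun x : ℝ => (1 - x) * p.eval x) '' Set.Icc (-1 : ℝ) 1) := by
  classical
  open Polynomial.Chebyshev Real Finset ModChebAux in
  set m := n + 1 with hm
  set M := sSup ((fun x : ℝ => (1 - x) * p.eval x) '' Set.Icc (-1 : ℝ) 1) with hMdef
  have hcont : Continuous fun x : ℝ => (1 - x) * p.eval x := by fun_prop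
  have hbdd : BddAbove ((fun x : ℝ => (1 - x) * p.eval x) '' Set.Icc (-1 : ℝ) 1) :=
    (isCompact_Icc.image hcont).bddAbove
  have hMle : ∀ x ∈ Set.Icc (-1:ℝ) 1, (1 - x) * p.eval x ≤ M := fun x hx =>
    le_csSup hbdd ⟨x, hx, rfl⟩
  -- nodes
  have hmpos : (0:ℝ) < m := by positivity
  set θ : Fin m → ℝ := fun j => ((j:ℝ)+1) * π / m with hθ
  have hθpos : ∀ j, 0 < θ j := fun j => by
    have : (0:ℝ) < ((j:ℝ)+1) * π := by positivity
    exact div_pos this hmpos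
  have hθle : ∀ j, θ j ≤ π := fun j => by
    rw [hθ, div_le_iff₀ hmpos]
    have hj : (j:ℝ) + 1 ≤ m := by
      have := j.isLt
      push_cast
      exact_mod_cast Nat.succ_le_of_lt this
    nlinarith [pi_pos]
  have hθmem : ∀ j, θ j ∈ Set.Icc (0:ℝ) π := fun j => ⟨(hθpos j).le, hθle j⟩
  set v : Fin m → ℝ := fun j => Real.cos (θ j) with hv
  have hθmono : StrictMono θ := by
    intro a b hab
    have : (a:ℝ) < b := by exact_mod_cast hab
    rw [hθ]
    have := pi_pos
    rw [div_lt_div_iff_of_pos_right hmpos]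
    nlinarith
  have hvanti : StrictAnti v := fun a b hab =>
    Real.strictAntiOn_cos (hθmem a) (hθmem b) (hθmono hab)
  have hvlt : ∀ j, v j < 1 := fun j => by
    have h := Real.strictAntiOn_cos (Set.mem_Icc.mpr ⟨le_refl 0, pi_pos.le⟩) (hθmem j) (hθpos j)
    simpa using h
  have hvmem : ∀ j, v j ∈ Set.Icc (-1:ℝ) 1 := fun j =>
    ⟨Real.neg_one_le_cos _, Real.cos_le_one _⟩
  have hinj : Set.InjOn v ↑(Finset.univ : Finset (Fin m)) := fun a _ b _ hab =>
    hvanti.injective hab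
  have hTv : ∀ j : Fin m, (T ℝ (m:ℤ)).eval (v j) = (-1:ℝ)^((j:ℕ)+1) := by
    intro j
    have h1 : (T ℝ (m:ℤ)).eval (Real.cos (θ j)) = Real.cos ((m:ℤ) * θ j) :=
      Polynomial.Chebyshev.T_real_cos (θ j) (m:ℤ)
    have h2 : ((m:ℤ):ℝ) * θ j = (((j:ℕ)+1 : ℕ):ℝ) * π := by
      rw [hθ]
      push_cast
      field_simp
    have h3 : Real.cos ((((j:ℕ)+1 : ℕ):ℝ) * π) = (-1:ℝ)^((j:ℕ)+1) := by
      have := Real.cos_nat_mul_pi_sub 0 ((j:ℕ)+1)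
      simpa using this
    rw [hv]
    simp only []
    rw [h1, h2, h3]
  -- interpolation identity at 1
  have interp : ∀ f : ℝ[X], f.natDegree ≤ n →
      f.eval 1 = ∑ j : Fin m, f.eval (v j) * (Lagrange.basis Finset.univ v j).eval 1 := by
    intro f hf
    have hdlt : f.degree < (Finset.univ : Finset (Fin m)).card := by
      rw [Finset.card_univ, Fintype.card_fin]
      refine lt_of_le_of_lt f.degree_le_natDegree ?_
      exact_mod_cast Nat.lt_of_le_of_lt hf (Nat.lt_succ_self n)
    have := Lagrange.eq_interpolate hinj hdlt
    conv_lhs => rw [this]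
    rw [Lagrange.interpolate_apply, eval_finset_sum]
    refine Finset.sum_congr rfl fun j _ => ?_
    rw [eval_mul, eval_C]
  -- the divided Chebyshev polynomial
  set q : ℝ[X] := T ℝ (m:ℤ) - 1 with hqdef
  have hq1 : q.eval 1 = 0 := by
    rw [hqdef]
    simp [T_eval_one' m]
  have hdvd : (X - C 1) ∣ q := dvd_iff_isRoot.mpr hq1
  set D : ℝ[X] := q /ₘ (X - C 1) with hD
  have hkey : q = (X - C 1) * D := by
    conv_lhs => rw [← modByMonic_add_div q (X - C 1)]
    rw [(modByMonic_eq_zero_iff_dvd (monic_X_sub_C 1)).mpr hdvd, zero_add]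
  have hD1 : D.eval 1 = (m:ℝ)^2 := by
    have hd := congrArg derivative hkey
    rw [derivative_mul] at hd
    have := congrArg (Polynomial.eval (1:ℝ)) hd
    simp only [eval_add, eval_mul, eval_sub, eval_X, eval_C, sub_self, zero_mul, add_zero,
      derivative_sub, derivative_X, derivative_C, derivative_one, sub_zero, one_mul] at this
    rw [hqdef] at this
    rw [derivative_sub, derivative_one, sub_zero] at this
    rw [deriv_T_one m] at this
    linarith [this]
  have hDdeg : D.natDegree ≤ n := by
    rw [hD, natDegree_divByMonic q (monic_X_sub_C 1)]
    have hq : q.natDegree ≤ m := by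
      rw [hqdef]
      refine le_trans (natDegree_sub_le _ _) ?_
      simp [natDegree_T_le' m]
    have : (X - C (1:ℝ)).natDegree = 1 := natDegree_X_sub_C 1
    omega
  have hDv : ∀ j : Fin m, D.eval (v j) = ((-1:ℝ)^((j:ℕ)+1) - 1) / (v j - 1) := by
    intro j
    have := congrArg (Polynomial.eval (v j)) hkey
    rw [hqdef] at this
    simp only [eval_sub, eval_mul, eval_X, eval_C, eval_one, hTv j] at this
    have hne : v j - 1 ≠ 0 := by linarith [hvlt j]
    field_simp
    linarith [this]
  -- comparison polynomial
  set S : ℝ[X] := C (M/2) * D with hS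
  have hSdeg : S.natDegree ≤ n := le_trans natDegree_mul_le (by simpa using hDdeg)
  set lam : Fin m → ℝ := fun j => (Lagrange.basis Finset.univ v j).eval 1 with hlam
  have hsign : ∀ j : Fin m, 0 ≤ (-1:ℝ)^(j:ℕ) * lam j := fun j =>
    basis_sign v hvanti hvlt j
  -- termwise comparison
  have hterm : ∀ j : Fin m, p.eval (v j) * lam j ≤ S.eval (v j) * lam j := by
    intro j
    have h1j : (0:ℝ) < 1 - v j := by linarith [hvlt j]
    have hpM : p.eval (v j) ≤ M / (1 - v j) := by
      rw [le_div_iff₀ h1j]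
      have := hMle (v j) (hvmem j)
      linarith
    have hSv : S.eval (v j) = (M/2) * (((-1:ℝ)^((j:ℕ)+1) - 1) / (v j - 1)) := by
      rw [hS, eval_mul, eval_C, hDv j]
    rcases Nat.even_or_odd (j:ℕ) with he | ho
    · -- even index: (-1)^(j+1) = -1
      have hpow : (-1:ℝ)^((j:ℕ)+1) = -1 := by
        rw [pow_succ, he.neg_one_pow, one_mul]
      have hSv' : S.eval (v j) = M / (1 - v j) := by
        rw [hSv, hpow]
        have hne : v j - 1 ≠ 0 := by linarith
        have hne' : 1 - v j ≠ 0 := by linarith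
        field_simp
        ring
      have hlampos : 0 ≤ lam j := by
        have := hsign j
        rw [he.neg_one_pow, one_mul] at this
        exact this
      rw [hSv']
      exact mul_le_mul_of_nonneg_right hpM hlampos
    · -- odd index: (-1)^(j+1) = 1, S vanishes
      have hpow : (-1:ℝ)^((j:ℕ)+1) = 1 := (ho.add_one).neg_one_pow
      have hSv' : S.eval (v j) = 0 := by
        rw [hSv, hpow]
        simp
      have hlamneg : lam j ≤ 0 := by
        have := hsign j
        rw [ho.neg_one_pow] at this
        linarith
      rw [hSv']
      have hp0 : 0 ≤ p.eval (v j) := hnonneg (v j) (hvmem j)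
      rw [zero_mul]
      exact mul_nonpos_of_nonneg_of_nonpos hp0 hlamneg
  -- sum up
  have hsum : (1:ℝ) ≤ (M/2) * (m:ℝ)^2 := by
    have hps : p.eval 1 = ∑ j : Fin m, p.eval (v j) * lam j := interp p hdeg
    have hSs : S.eval 1 = ∑ j : Fin m, S.eval (v j) * lam j := interp S hSdeg
    have hle : p.eval 1 ≤ S.eval 1 := by
      rw [hps, hSs]
      exact Finset.sum_le_sum fun j _ => hterm j
    have hS1 : S.eval 1 = (M/2) * (m:ℝ)^2 := by rw [hS, eval_mul, eval_C, hD1]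
    rw [hone, hS1] at hle
    exact hle
  have hmr : ((n:ℝ)+1) = (m:ℝ) := by push_cast [hm]; ring
  rw [hmr, div_le_iff₀ (by positivity)]
  nlinarith [hsum]
end

section
/- Let n be a positive integer and let p be a real polynomial of degree at most n that is nonnegative on [-1,1] and satisfies p(1) = 1. Then max_{x ∈ [-1,1]} (1-x)·p(x) = 2/(n+1)² holds if and only if p = g_n, i.e., if and only if (n+1)²·(1-x)·p(x) = 1 - T_{n+1}(x) for all x. -/
open Polynomial


lemma alt_lemma : ∀ (m : ℕ) (h : Polynomial ℝ) (t : ℕ → ℝ),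
    (∀ i j : ℕ, i < j → j ≤ m → t j < t i) →
    (∀ j : ℕ, j ≤ m → 0 ≤ (-1 : ℝ)^j * h.eval (t j)) →
    h.degree < (m : ℕ) → h = 0 := by
  intro m
  induction m with
  | zero =>
    intro h t _ _ hdeg
    rw [← Polynomial.degree_eq_bot]
    exact Nat.WithBot.lt_zero_iff.mp (by exact_mod_cast hdeg)
  | succ m ih =>
    intro h t hmono hsign hdeg
    -- common step: given a root s with certain properties, finish
    have key : ∀ s : ℝ, h.eval s = 0 →
        (∀ i : ℕ, i ≤ m → ∃ u : ℕ → ℝ, True) → True := fun _ _ _ => trivial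
    by_cases hz : ∃ j : ℕ, j ≤ m + 1 ∧ h.eval (t j) = 0
    · obtain ⟨j, hjm, hje⟩ := hz
      obtain ⟨h₁, hfac⟩ := (dvd_iff_isRoot.mpr hje : (X - C (t j)) ∣ h)
      by_cases h₁0 : h₁ = 0
      · rw [hfac, h₁0, mul_zero]
      have hne : h ≠ 0 := by
        rw [hfac]
        exact mul_ne_zero (X_sub_C_ne_zero _) h₁0
      have hdeg1 : h₁.degree < (m : ℕ) := by
        rw [← natDegree_lt_iff_degree_lt h₁0]
        have : h.natDegree = h₁.natDegree + 1 := by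
          rw [hfac, natDegree_mul (X_sub_C_ne_zero _) h₁0, natDegree_X_sub_C]
          ring
        have := (natDegree_lt_iff_degree_lt hne).mpr hdeg
        omega
      set u : ℕ → ℝ := fun i => if i < j then t i else t (i + 1) with hu
      have humem : ∀ i : ℕ, i ≤ m → (u i = t i ∧ i < j) ∨ (u i = t (i+1) ∧ j ≤ i) := by
        intro i hi
        by_cases hij : i < j
        · exact Or.inl ⟨by simp [hu, hij], hij⟩
        · exact Or.inr ⟨by simp [hu, hij], le_of_not_gt hij⟩
      have humono : ∀ i i' : ℕ, i < i' → i' ≤ m → u i' < u i := by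
        intro i i' hii hi'
        rcases humem i (le_of_lt (lt_of_lt_of_le hii hi')) with ⟨e1, c1⟩ | ⟨e1, c1⟩ <;>
          rcases humem i' hi' with ⟨e2, c2⟩ | ⟨e2, c2⟩ <;> rw [e1, e2]
        · exact hmono i i' hii (by omega)
        · exact hmono i (i'+1) (by omega) (by omega)
        · omega
        · exact hmono (i+1) (i'+1) (by omega) (by omega)
      have husign : ∀ i : ℕ, i ≤ m → 0 ≤ (-1 : ℝ)^i * h₁.eval (u i) := by
        intro i hi
        rcases humem i hi with ⟨e1, c1⟩ | ⟨e1, c1⟩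
        · -- i < j : t i > t j
          have hpos : 0 < t i - t j := sub_pos.mpr (hmono i j c1 hjm)
          have := hsign i (by omega)
          rw [hfac] at this
          simp only [eval_mul, eval_sub, eval_X, eval_C] at this
          have h2 : 0 ≤ (t i - t j) * ((-1:ℝ)^i * h₁.eval (t i)) := by nlinarith [this]
          rw [e1]
          exact (mul_nonneg_iff_of_pos_left hpos).mp h2
        · -- i ≥ j : t (i+1) < t j
          have hpos : 0 < t j - t (i + 1) := sub_pos.mpr (hmono j (i+1) (by omega) (by omega))
          have := hsign (i+1) (by omega)
          rw [hfac] at this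
          simp only [eval_mul, eval_sub, eval_X, eval_C, pow_succ] at this
          have h2 : 0 ≤ (t j - t (i+1)) * ((-1:ℝ)^i * h₁.eval (t (i+1))) := by nlinarith [this]
          rw [e1]
          exact (mul_nonneg_iff_of_pos_left hpos).mp h2
      have := ih h₁ u humono husign hdeg1
      exact absurd this h₁0
    · push_neg at hz
      have h0pos : 0 < h.eval (t 0) := by
        have := hsign 0 (by omega)
        have hne := hz 0 (by omega)
        simpa using lt_of_le_of_ne (by simpa using this) (Ne.symm hne)
      have h1neg : h.eval (t 1) < 0 := by
        have := hsign 1 (by omega)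
        have hne := hz 1 (by omega)
        simp only [pow_one] at this
        nlinarith [lt_of_le_of_ne this (Ne.symm (by simpa using neg_ne_zero.mpr hne))]
      have hlt : t 1 < t 0 := hmono 0 1 (by omega) (by omega)
      have hcont : ContinuousOn (fun x => h.eval x) (Set.Icc (t 1) (t 0)) :=
        (Polynomial.continuous h).continuousOn
      have : (0:ℝ) ∈ Set.Ioo (h.eval (t 1)) (h.eval (t 0)) := ⟨h1neg, h0pos⟩
      obtain ⟨s, hsmem, hs0⟩ := intermediate_value_Ioo (le_of_lt hlt) hcont this
      obtain ⟨h₁, hfac⟩ := (dvd_iff_isRoot.mpr hs0 : (X - C s) ∣ h)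
      by_cases h₁0 : h₁ = 0
      · rw [hfac, h₁0, mul_zero]
      have hne : h ≠ 0 := by rw [hfac]; exact mul_ne_zero (X_sub_C_ne_zero _) h₁0
      have hdeg1 : h₁.degree < (m : ℕ) := by
        rw [← natDegree_lt_iff_degree_lt h₁0]
        have : h.natDegree = h₁.natDegree + 1 := by
          rw [hfac, natDegree_mul (X_sub_C_ne_zero _) h₁0, natDegree_X_sub_C]; ring
        have := (natDegree_lt_iff_degree_lt hne).mpr hdeg
        omega
      have husign : ∀ i : ℕ, i ≤ m → 0 ≤ (-1 : ℝ)^i * h₁.eval (t (i+1)) := by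
        intro i hi
        have hle : t (i+1) ≤ t 1 := by
          rcases Nat.eq_or_lt_of_le (show 1 ≤ i + 1 by omega) with he | hl
          · rw [← he]
          · exact le_of_lt (hmono 1 (i+1) hl (by omega))
        have hpos : 0 < s - t (i + 1) := by
          have := hsmem.1; linarith
        have := hsign (i+1) (by omega)
        rw [hfac] at this
        simp only [eval_mul, eval_sub, eval_X, eval_C, pow_succ] at this
        have h2 : 0 ≤ (s - t (i+1)) * ((-1:ℝ)^i * h₁.eval (t (i+1))) := by nlinarith [this]
        exact (mul_nonneg_iff_of_pos_left hpos).mp h2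
      have := ih h₁ (fun i => t (i+1)) (fun i i' hii hi' => hmono (i+1) (i'+1) (by omega) (by omega)) husign hdeg1
      exact absurd this h₁0

section
open Polynomial.Chebyshev

lemma cheb_facts : ∀ k : ℕ, (T ℝ (k:ℤ)).eval 1 = 1 ∧
    (derivative (T ℝ (k:ℤ))).eval 1 = (k:ℝ)^2 ∧ (T ℝ (k:ℤ)).natDegree ≤ k := by
  intro k
  induction k using Nat.strong_induction_on with
  | _ k ih =>
    match k with
    | 0 => simp [T_zero]
    | 1 => simp [T_one]
    | (j+2) =>
      obtain ⟨e0, d0, n0⟩ := ih j (by omega)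
      obtain ⟨e1, d1, n1⟩ := ih (j+1) (by omega)
      have hrec : T ℝ ((j:ℤ)+2) = 2 * X * T ℝ ((j:ℤ)+1) - T ℝ (j:ℤ) := T_add_two ℝ j
      have hcast : ((j+2 : ℕ) : ℤ) = (j:ℤ) + 2 := by push_cast; ring
      have hcast1 : ((j+1 : ℕ) : ℤ) = (j:ℤ) + 1 := by push_cast; ring
      rw [hcast, hrec]
      rw [hcast1] at e1 d1 n1
      refine ⟨?_, ?_, ?_⟩
      · simp [e0, e1]; norm_num
      · simp only [derivative_sub, derivative_mul, derivative_X, derivative_ofNat,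
          eval_sub, eval_mul, eval_add, eval_X, eval_ofNat, mul_one, zero_mul,
          derivative_one, eval_zero]
        push_cast at d0 d1 ⊢
        rw [d1, d0, e1]
        ring
      · refine le_trans (natDegree_sub_le _ _) (max_le ?_ (by omega))
        refine le_trans (natDegree_mul_le) ?_
        have : (2 * X : ℝ[X]).natDegree ≤ 1 := le_trans natDegree_mul_le (by simp)
        omega

end

set_option maxHeartbeats 1600000 in
theorem modified_chebyshev_equality_case
    (n : ℕ) (hn : 1 ≤ n) (p : Polynomial ℝ)
    (hdeg : p.natDegree ≤ n)
    (hnonneg : ∀ x ∈ Set.Icc (-1 : ℝ) 1, 0 ≤ p.eval x)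
    (hone : p.eval 1 = 1) :
    sSup ((fun x : ℝ => (1 - x) * p.eval x) '' Set.Icc (-1 : ℝ) 1) =
        2 / ((n : ℝ) + 1) ^ 2 ↔
      ∀ x : ℝ, ((n : ℝ) + 1) ^ 2 * (1 - x) * p.eval x =
        1 - (Polynomial.Chebyshev.T ℝ ((n : ℤ) + 1)).eval x := by
  have hNpos : (0:ℝ) < ((n : ℝ) + 1) ^ 2 := by positivity
  set N : ℝ := ((n : ℝ) + 1) ^ 2 with hN
  set Tn : Polynomial ℝ := Chebyshev.T ℝ ((n : ℤ) + 1) with hTn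
  have hcast : ((n:ℤ) + 1) = ((n + 1 : ℕ) : ℤ) := by push_cast; ring
  obtain ⟨hT1, hT'1, hTdeg⟩ := cheb_facts (n + 1)
  rw [← hcast] at hT1 hT'1 hTdeg
  have hnposR : (0:ℝ) < (n:ℝ) + 1 := by positivity
  -- evaluation of Tn at cosines
  have hTcos : ∀ θ : ℝ, Tn.eval (Real.cos θ) = Real.cos (((n:ℝ) + 1) * θ) := by
    intro θ
    have := Polynomial.Chebyshev.T_real_cos θ ((n:ℤ) + 1)
    rw [hTn, this]
    push_cast
    ring_nf
  have hTbound : ∀ x ∈ Set.Icc (-1:ℝ) 1, -1 ≤ Tn.eval x ∧ Tn.eval x ≤ 1 := by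
    intro x hx
    have hc : Real.cos (Real.arccos x) = x := Real.cos_arccos hx.1 hx.2
    rw [← hc, hTcos]
    exact ⟨Real.neg_one_le_cos _, Real.cos_le_one _⟩
  constructor
  · -- forward
    intro hsup
    have hcont : Continuous fun x : ℝ => (1 - x) * p.eval x :=
      (continuous_const.sub continuous_id).mul (Polynomial.continuous p)
    have hbdd : BddAbove ((fun x : ℝ => (1 - x) * p.eval x) '' Set.Icc (-1 : ℝ) 1) :=
      (isCompact_Icc.image hcont).bddAbove
    have hub : ∀ x ∈ Set.Icc (-1:ℝ) 1, (1 - x) * p.eval x ≤ 2 / N := by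
      intro x hx
      rw [← hsup]
      exact le_csSup hbdd ⟨x, hx, rfl⟩
    set q : Polynomial ℝ := C N * ((1 - X) * p) - (1 - Tn) with hq
    have hqeval : ∀ x : ℝ, q.eval x = N * ((1 - x) * p.eval x) - (1 - Tn.eval x) := by
      intro x; simp [hq]
    have hq1 : q.eval 1 = 0 := by rw [hqeval]; rw [hT1]; ring
    have hq'1 : (derivative q).eval 1 = 0 := by
      rw [hq]
      simp only [derivative_sub, derivative_mul, derivative_C, derivative_one,
        derivative_X, zero_mul, zero_sub, zero_add, eval_sub, eval_add, eval_mul,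
        eval_C, eval_one, eval_X, eval_neg, eval_zero]
      rw [hT'1, hone]
      push_cast
      ring
    -- factor out (X - 1)^2
    obtain ⟨q₁, hfac1⟩ := (dvd_iff_isRoot.mpr hq1 : (X - C 1) ∣ q)
    have hq₁1 : q₁.eval 1 = 0 := by
      have : (derivative q).eval 1 = q₁.eval 1 := by
        rw [hfac1]
        simp [derivative_mul]
      rw [← this, hq'1]
    obtain ⟨h, hfac2⟩ := (dvd_iff_isRoot.mpr hq₁1 : (X - C 1) ∣ q₁)
    have hfac : q = (X - C 1)^2 * h := by rw [hfac1, hfac2]; ring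
    -- main goal via q = 0
    have hq0 : q = 0 := by
      by_cases h0 : h = 0
      · rw [hfac, h0, mul_zero]
      -- degree of h
      have hqne : q ≠ 0 := by
        rw [hfac]; exact mul_ne_zero (pow_ne_zero _ (X_sub_C_ne_zero _)) h0
      have hqdeg : q.natDegree ≤ n + 1 := by
        rw [hq]
        refine le_trans (natDegree_sub_le _ _) (max_le ?_ ?_)
        · refine le_trans natDegree_mul_le ?_
          have h2 : ((1 - X : ℝ[X]) * p).natDegree ≤ 1 + n := by
            refine le_trans natDegree_mul_le ?_
            have : (1 - X : ℝ[X]).natDegree ≤ 1 :=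
              le_trans (natDegree_sub_le _ _) (by simp)
            omega
          simp only [natDegree_C]
          omega
        · exact le_trans (natDegree_sub_le _ _) (by simp [hTn]; omega)
      have hhdeg : h.degree < (n : ℕ) := by
        rw [← natDegree_lt_iff_degree_lt h0]
        have e : q.natDegree = 2 + h.natDegree := by
          rw [hfac, natDegree_mul (pow_ne_zero _ (X_sub_C_ne_zero _)) h0]
          rw [natDegree_pow, natDegree_X_sub_C]
        omega
      -- nodes
      set t : ℕ → ℝ := fun i => Real.cos (((i:ℝ) + 1) * Real.pi / ((n:ℝ) + 1)) with ht
      have hangle : ∀ i : ℕ, i ≤ n →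
          0 < ((i:ℝ) + 1) * Real.pi / ((n:ℝ) + 1) ∧
          ((i:ℝ) + 1) * Real.pi / ((n:ℝ) + 1) ≤ Real.pi := by
        intro i hi
        constructor
        · positivity
        · rw [div_le_iff₀ hnposR]
          have : (i:ℝ) + 1 ≤ (n:ℝ) + 1 := by
            have := (Nat.cast_le (α := ℝ)).mpr hi; linarith
          nlinarith [Real.pi_pos]
      have hmem : ∀ i : ℕ, i ≤ n → t i ∈ Set.Icc (-1:ℝ) 1 :=
        fun i _ => ⟨Real.neg_one_le_cos _, Real.cos_le_one _⟩
      have htlt1 : ∀ i : ℕ, i ≤ n → t i < 1 := by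
        intro i hi
        obtain ⟨h1, h2⟩ := hangle i hi
        have := Real.strictAntiOn_cos (Set.mem_Icc.mpr ⟨le_refl 0, Real.pi_pos.le⟩)
          (Set.mem_Icc.mpr ⟨h1.le, h2⟩) h1
        simpa [ht] using this
      have hmono : ∀ i j : ℕ, i < j → j ≤ n → t j < t i := by
        intro i j hij hj
        obtain ⟨hi1, hi2⟩ := hangle i (by omega)
        obtain ⟨hj1, hj2⟩ := hangle j hj
        refine Real.strictAntiOn_cos (Set.mem_Icc.mpr ⟨hi1.le, hi2⟩)
          (Set.mem_Icc.mpr ⟨hj1.le, hj2⟩) ?_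
        have : (i:ℝ) < (j:ℝ) := by exact_mod_cast hij
        have hp := Real.pi_pos
        rw [div_lt_div_iff₀ hnposR hnposR]
        nlinarith [mul_pos hp hnposR]
      have hTnode : ∀ i : ℕ, Tn.eval (t i) = (-1:ℝ)^(i+1) := by
        intro i
        rw [ht]
        simp only
        rw [hTcos]
        have harg : ((n:ℝ) + 1) * (((i:ℝ) + 1) * Real.pi / ((n:ℝ) + 1)) =
            ((i + 1 : ℕ) : ℝ) * Real.pi - 0 := by
          push_cast
          field_simp
          ring
        rw [harg, Real.cos_nat_mul_pi_sub]
        simp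
      -- sign conditions for -h
      have hsign : ∀ i : ℕ, i ≤ n → 0 ≤ (-1:ℝ)^i * (-h).eval (t i) := by
        intro i hi
        have hq_node : q.eval (t i) = N * ((1 - t i) * p.eval (t i)) - (1 - (-1:ℝ)^(i+1)) := by
          rw [hqeval, hTnode]
        have hq_fac : q.eval (t i) = (t i - 1)^2 * h.eval (t i) := by
          rw [hfac]; simp
        have hsq : 0 < (t i - 1)^2 := by
          have := htlt1 i hi; nlinarith
        rcases Nat.even_or_odd i with he | ho
        · -- i even : q(t i) ≤ 0, want -h ≥ 0
          have e1 : (-1:ℝ)^(i+1) = -1 := (he.add_one).neg_one_pow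
          have hle : q.eval (t i) ≤ 0 := by
            rw [hq_node, e1]
            have := hub (t i) (hmem i hi)
            have h2N : N * ((1 - t i) * p.eval (t i)) ≤ 2 := by
              rw [← mul_le_mul_iff_right₀ hNpos] at this
              calc N * ((1 - t i) * p.eval (t i)) ≤ N * (2 / N) := this
                _ = 2 := by field_simp
            linarith
          have hh : h.eval (t i) ≤ 0 := by
            by_contra hc
            push_neg at hc
            nlinarith [hq_fac, hle]
          rw [he.neg_one_pow]
          simpa using hh
        · -- i odd : q(t i) ≥ 0, want h ≥ 0
          have e1 : (-1:ℝ)^(i+1) = 1 := (ho.add_one).neg_one_pow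
          have hge : 0 ≤ q.eval (t i) := by
            rw [hq_node, e1]
            have h1 : 0 ≤ (1 - t i) * p.eval (t i) :=
              mul_nonneg (by linarith [(hmem i hi).2]) (hnonneg _ (hmem i hi))
            nlinarith
          have hh : 0 ≤ h.eval (t i) := by
            by_contra hc
            push_neg at hc
            nlinarith [hq_fac, hge]
          rw [ho.neg_one_pow]
          simpa using hh
      have hhz := alt_lemma n (-h) t hmono hsign (by simpa using hhdeg)
      exact absurd (neg_eq_zero.mp hhz) h0
    intro x
    have := congrArg (Polynomial.eval x) hq0
    rw [hqeval] at this
    simp only [eval_zero] at this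
    linear_combination this
  · -- reverse
    intro hid
    have hval : ∀ x : ℝ, N * ((1 - x) * p.eval x) = 1 - Tn.eval x := by
      intro x
      linear_combination hid x
    have hgreat : IsGreatest ((fun x : ℝ => (1 - x) * p.eval x) '' Set.Icc (-1 : ℝ) 1)
        (2 / N) := by
      constructor
      · -- attained at cos(π/(n+1))
        refine ⟨Real.cos (Real.pi / ((n:ℝ) + 1)),
          ⟨Real.neg_one_le_cos _, Real.cos_le_one _⟩, ?_⟩
        have hTval : Tn.eval (Real.cos (Real.pi / ((n:ℝ) + 1))) = -1 := by
          rw [hTcos]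
          rw [mul_div_cancel₀ _ hnposR.ne']
          exact Real.cos_pi
        have := hval (Real.cos (Real.pi / ((n:ℝ) + 1)))
        rw [hTval] at this
        field_simp at this ⊢
        linarith
      · rintro y ⟨x, hx, rfl⟩
        show (1 - x) * p.eval x ≤ 2 / N
        have h1 := hval x
        have h2 := (hTbound x hx).1
        rw [le_div_iff₀ hNpos]
        nlinarith
    rw [hgreat.csSup_eq]
end

section
/- Let n be a positive integer and let p be a real polynomial of degree at most n satisfying p(1) = 1. Then max_{x ∈ [-1,1]} (1-x)·p(x)² ≥ 2/(2n+1)². -/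
open Polynomial

/-- Degree bound for Chebyshev polynomials (missing from this Mathlib version). -/
lemma natDegree_chebyshev_T_le (k : ℕ) : (Chebyshev.T ℝ (k : ℤ)).natDegree ≤ k := by
  induction k using Nat.strong_induction_on with
  | _ k ih =>
    match k with
    | 0 => simp [Chebyshev.T_zero]
    | 1 => simpa [Chebyshev.T_one] using natDegree_X_le
    | (k+2) =>
      have h : Chebyshev.T ℝ ((k:ℤ)+2) = 2 * X * Chebyshev.T ℝ ((k:ℤ)+1) - Chebyshev.T ℝ (k:ℤ) :=
        Chebyshev.T_add_two ℝ (k:ℤ)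
      have h1 : ((k:ℤ)+1) = ((k+1 : ℕ) : ℤ) := by push_cast; ring
      have h2 : ((k:ℤ)+2) = ((k+2 : ℕ) : ℤ) := by push_cast; ring
      rw [h1, h2] at h
      rw [h]
      refine (natDegree_sub_le _ _).trans (max_le ?_ ((ih k (by omega)).trans (by omega)))
      refine (natDegree_mul_le).trans ?_
      have : (2 * X : ℝ[X]).natDegree ≤ 1 := natDegree_mul_le.trans (by simp)
      have := ih (k+1) (by omega)
      omega

/-- IVT helper: sign change gives a root in the open interval. -/
lemma exists_root_of_mul_neg {f : ℝ → ℝ} (hf : Continuous f) {a b : ℝ} (hab : a < b)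
    (h : f a * f b < 0) : ∃ z ∈ Set.Ioo a b, f z = 0 := by
  rcases lt_or_ge (f a) 0 with ha | ha
  · have hb : 0 < f b := by nlinarith
    have := intermediate_value_Ioo hab.le hf.continuousOn (Set.mem_Ioo.2 ⟨ha, hb⟩)
    obtain ⟨z, hz, hz0⟩ := this
    exact ⟨z, hz, hz0⟩
  · have ha' : 0 < f a := by
      rcases ha.lt_or_eq with h'|h'
      · exact h'
      · exfalso; rw [← h'] at h; simpa using h
    have hb : f b < 0 := by nlinarith
    have := intermediate_value_Ioo' hab.le hf.continuousOn (Set.mem_Ioo.2 ⟨hb, ha'⟩)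
    obtain ⟨z, hz, hz0⟩ := this
    exact ⟨z, hz, hz0⟩

set_option maxHeartbeats 2000000 in
theorem dirichlet_square_lower_bound
    (n : ℕ) (hn : 1 ≤ n) (p : Polynomial ℝ)
    (hdeg : p.natDegree ≤ n)
    (hone : p.eval 1 = 1) :
    (2 : ℝ) / (2 * (n : ℝ) + 1) ^ 2 ≤
      sSup ((fun x : ℝ => (1 - x) * p.eval x ^ 2) '' Set.Icc (-1 : ℝ) 1) := by
  by_contra hcon
  push_neg at hcon
  set c : ℝ := (2 * (n : ℝ) + 1)⁻¹ with hc
  have hcpos : 0 < c := by positivity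
  -- every value is below the bound
  have hbdd : BddAbove ((fun x : ℝ => (1 - x) * p.eval x ^ 2) '' Set.Icc (-1 : ℝ) 1) :=
    (isCompact_Icc.image ((continuous_const.sub continuous_id').mul
      ((Polynomial.continuous p).pow 2))).bddAbove
  have hsup : ∀ x ∈ Set.Icc (-1:ℝ) 1, (1 - x) * p.eval x ^ 2 < 2 / (2 * (n:ℝ) + 1) ^ 2 :=
    fun x hx => lt_of_le_of_lt (le_csSup hbdd ⟨x, hx, rfl⟩) hcon
  -- the odd polynomial q(s) = s * p(1 - 2s²)
  set q : ℝ[X] := X * (p.comp (1 - 2 * X ^ 2)) with hq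
  have hqeval : ∀ s : ℝ, q.eval s = s * p.eval (1 - 2 * s ^ 2) := by
    intro s; simp [hq, eval_comp]
  have hqb : ∀ s ∈ Set.Icc (-1:ℝ) 1, |q.eval s| < c := by
    intro s hs
    obtain ⟨hs1, hs2⟩ := hs
    have hssq : s ^ 2 ≤ 1 := by nlinarith
    have hx : (1 - 2 * s ^ 2) ∈ Set.Icc (-1:ℝ) 1 := ⟨by nlinarith, by nlinarith⟩
    have h1 := hsup _ hx
    have h2 : (q.eval s) ^ 2 < c ^ 2 := by
      rw [hqeval]
      have hD : (0:ℝ) < (2 * (n:ℝ) + 1) ^ 2 := by positivity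
      have h1' := (lt_div_iff₀ hD).mp h1
      have e : c ^ 2 = 1 / (2*(n:ℝ)+1)^2 := by rw [hc, inv_pow]; ring
      rw [e, lt_div_iff₀ hD]
      nlinarith [h1']
    exact abs_lt_of_sq_lt_sq h2 hcpos.le
  
  -- degree, value and derivative facts for q
  have hqd : q.natDegree ≤ 2 * n + 1 := by
    refine natDegree_mul_le.trans ?_
    have h1 : (p.comp (1 - 2 * X ^ 2)).natDegree ≤ n * 2 := by
      refine natDegree_comp_le.trans ?_
      have h2 : (1 - 2 * X ^ 2 : ℝ[X]).natDegree ≤ 2 := by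
        refine (natDegree_sub_le _ _).trans (max_le (by simp) ?_)
        exact natDegree_mul_le.trans (by simp)
      exact Nat.mul_le_mul hdeg h2
    have h3 := natDegree_X_le (R := ℝ)
    omega
  have hq0 : q.eval 0 = 0 := by simp [hqeval]
  have hq'0 : (derivative q).eval 0 = 1 := by
    rw [hq]
    simp [derivative_mul, eval_comp, hone]
  -- Chebyshev polynomial facts
  have hpi := Real.pi_pos
  have hden : (0:ℝ) < 2 * (n:ℝ) + 1 := by positivity
  set T : ℝ[X] := Chebyshev.T ℝ (2 * (n:ℤ) + 1) with hT
  have hTd : T.natDegree ≤ 2 * n + 1 := by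
    have e : (2 * (n:ℤ) + 1) = ((2 * n + 1 : ℕ) : ℤ) := by push_cast; ring
    rw [hT, e]
    exact natDegree_chebyshev_T_le _
  have hT1 : T.eval 1 = 1 := by
    have := Chebyshev.T_real_cos 0 (2 * (n:ℤ) + 1)
    rw [hT]; simp
  have hT0 : T.eval 0 = 0 := by
    have h1 := Chebyshev.T_real_cos (Real.pi/2) (2 * (n:ℤ) + 1)
    rw [Real.cos_pi_div_two] at h1
    rw [hT, h1]
    have e : ((2 * (n:ℤ) + 1 : ℤ):ℝ) * (Real.pi/2) = (n:ℝ) * Real.pi + Real.pi/2 := by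
      push_cast; ring
    rw [e, Real.cos_add, Real.cos_pi_div_two, Real.sin_pi_div_two, Real.sin_nat_mul_pi]
    ring
  have hcosnpi : Real.cos ((n:ℝ) * Real.pi) = (-1:ℝ)^n := by
    have := Real.cos_nat_mul_pi_sub 0 n
    simpa using this
  have hT'0 : (derivative T).eval 0 = (2 * (n:ℝ) + 1) * (-1:ℝ)^n := by
    rw [hT, Chebyshev.T_derivative_eq_U]
    have hU : (Chebyshev.U ℝ (2 * (n:ℤ) + 1 - 1)).eval 0 = (-1:ℝ)^n := by
      have h1 := Chebyshev.U_real_cos (Real.pi/2) (2 * (n:ℤ) + 1 - 1)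
      rw [Real.cos_pi_div_two, Real.sin_pi_div_two, mul_one] at h1
      rw [h1]
      have e : ((2 * (n:ℤ) + 1 - 1 : ℤ):ℝ) + 1 = 2 * (n:ℝ) + 1 := by push_cast; ring
      rw [e]
      have e2 : (2 * (n:ℝ) + 1) * (Real.pi/2) = (n:ℝ) * Real.pi + Real.pi/2 := by ring
      rw [e2, Real.sin_add, Real.cos_pi_div_two, Real.sin_pi_div_two, Real.sin_nat_mul_pi,
        hcosnpi]
      ring
    rw [eval_mul, hU, eval_intCast]
    push_cast; ring
  -- the comparison polynomial
  set ε : ℝ := (-1:ℝ)^n with hε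
  have hεsq : ε * ε = 1 := by rw [hε, ← mul_pow]; norm_num
  set h : ℝ[X] := C c * T - C ε * q with hh
  have hhd : h.natDegree ≤ 2 * n + 1 := by
    refine (natDegree_sub_le _ _).trans (max_le ?_ ?_)
    · exact (natDegree_C_mul_le _ _).trans hTd
    · exact (natDegree_C_mul_le _ _).trans hqd
  have hh0 : h.eval 0 = 0 := by simp [hh, hT0, hq0]
  have hh'0 : (derivative h).eval 0 = 0 := by
    rw [hh]
    simp only [derivative_sub, derivative_C_mul, eval_sub, eval_mul, eval_C, hT'0, hq'0]
    rw [hc]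
    field_simp
    ring
  -- the Chebyshev nodes
  set x : ℕ → ℝ := fun j => Real.cos ((j:ℝ) * Real.pi / (2 * (n:ℝ) + 1)) with hx
  have hxicc : ∀ j : ℕ, x j ∈ Set.Icc (-1:ℝ) 1 :=
    fun j => ⟨Real.neg_one_le_cos _, Real.cos_le_one _⟩
  have hargmem : ∀ j : ℕ, j ≤ 2 * n + 1 → ((j:ℝ) * Real.pi / (2 * (n:ℝ) + 1)) ∈
      Set.Icc (0:ℝ) Real.pi := by
    intro j hj
    constructor
    · positivity
    · rw [div_le_iff₀ hden]
      have : (j:ℝ) ≤ 2 * (n:ℝ) + 1 := by exact_mod_cast hj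
      nlinarith
  have hxanti : ∀ j k : ℕ, j < k → k ≤ 2 * n + 1 → x k < x j := by
    intro j k hjk hk
    refine Real.strictAntiOn_cos (hargmem j (by omega)) (hargmem k hk) ?_
    have : (j:ℝ) < (k:ℝ) := by exact_mod_cast hjk
    have h2 : (j:ℝ) * Real.pi < (k:ℝ) * Real.pi := by nlinarith
    exact div_lt_div_of_pos_right h2 hden
  have hTx : ∀ j : ℕ, T.eval (x j) = (-1:ℝ)^j := by
    intro j
    rw [hT, hx]
    rw [Chebyshev.T_real_cos]
    have e : ((2 * (n:ℤ) + 1 : ℤ):ℝ) * ((j:ℝ) * Real.pi / (2 * (n:ℝ) + 1)) =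
        (j:ℝ) * Real.pi := by
      push_cast
      field_simp
    rw [e]
    have := Real.cos_nat_mul_pi_sub 0 j
    simpa using this
  have hsign : ∀ j : ℕ, j ≤ 2 * n + 1 → 0 < (-1:ℝ)^j * h.eval (x j) := by
    intro j hj
    rw [hh, eval_sub, eval_mul, eval_mul, eval_C, eval_C, hTx j]
    have hb := hqb (x j) (hxicc j)
    rw [abs_lt] at hb
    have h1 : ((-1:ℝ)^j) * ((-1:ℝ)^j) = 1 := by rw [← mul_pow]; norm_num
    have h2 : (-1:ℝ)^j * ε = 1 ∨ (-1:ℝ)^j * ε = -1 := by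
      rw [hε, ← pow_add]
      rcases Nat.even_or_odd (j + n) with hp | hp
      · exact Or.inl hp.neg_one_pow
      · exact Or.inr hp.neg_one_pow
    have e : (-1:ℝ)^j * (c * (-1:ℝ)^j - ε * q.eval (x j)) =
        c * ((-1:ℝ)^j * (-1:ℝ)^j) - ((-1:ℝ)^j * ε) * q.eval (x j) := by ring
    rw [e, h1, mul_one]
    rcases h2 with h2 | h2 <;> rw [h2] <;> linarith
  
  have hxle : ∀ j k : ℕ, j ≤ k → k ≤ 2 * n + 1 → x k ≤ x j := by
    intro j k hjk hk
    rcases eq_or_lt_of_le hjk with rfl | hlt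
    · exact le_refl _
    · exact (hxanti j k hlt hk).le
  by_cases hzero : h = 0
  · -- if h = 0 then |q(1)| = c, contradicting |q(1)| < c
    have h1 : h.eval 1 = 0 := by rw [hzero]; simp
    rw [hh, eval_sub, eval_mul, eval_mul, eval_C, eval_C, hT1, mul_one] at h1
    have hb := hqb 1 ⟨by norm_num, le_refl 1⟩
    have h2 : |ε * q.eval 1| = |q.eval 1| := by
      rw [abs_mul, hε, abs_pow]; norm_num
    have h3 : ε * q.eval 1 = c := by linarith
    have h4 : |ε * q.eval 1| < c := by rw [h2]; exact hb
    rw [h3, abs_of_pos hcpos] at h4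
    exact lt_irrefl _ h4
  · -- h ≠ 0 : count roots
    have hdvd : (X : ℝ[X]) ^ 2 ∣ h := by
      rw [X_pow_dvd_iff]
      intro d hd
      interval_cases d
      · rw [coeff_zero_eq_eval_zero]; exact hh0
      · have h5 := coeff_derivative h 0
        rw [coeff_zero_eq_eval_zero, hh'0] at h5
        simpa using h5.symm
    obtain ⟨g, hg⟩ := hdvd
    have hgne : g ≠ 0 := by rintro rfl; exact hzero (by simpa using hg)
    have hgd : g.natDegree ≤ 2 * n - 1 := by
      have h6 : h.natDegree = 2 + g.natDegree := by
        rw [hg, natDegree_mul (pow_ne_zero _ X_ne_zero) hgne, natDegree_X_pow]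
      omega
    have hroot : ∀ j : ℕ, j ≤ 2 * n → ∃ z ∈ Set.Ioo (x (j+1)) (x j), h.eval z = 0 := by
      intro j hj
      apply exists_root_of_mul_neg (Polynomial.continuous h)
        (hxanti j (j+1) (by omega) (by omega))
      have ha := hsign (j+1) (by omega)
      have hb := hsign j (by omega)
      have e : ((-1:ℝ)^(j+1) * h.eval (x (j+1))) * ((-1:ℝ)^j * h.eval (x j))
          = -(h.eval (x (j+1)) * h.eval (x j)) := by
        have h1 : (-1:ℝ)^(j+1) * (-1:ℝ)^j = -1 := by
          rw [← pow_add]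
          exact Odd.neg_one_pow ⟨j, by ring⟩
        calc ((-1:ℝ)^(j+1) * h.eval (x (j+1))) * ((-1:ℝ)^j * h.eval (x j))
            = ((-1:ℝ)^(j+1) * (-1:ℝ)^j) * (h.eval (x (j+1)) * h.eval (x j)) := by ring
          _ = -(h.eval (x (j+1)) * h.eval (x j)) := by rw [h1]; ring
      have h7 := mul_pos ha hb
      rw [e] at h7
      linarith
    have hroot' : ∀ j : ℕ, ∃ z : ℝ, j ≤ 2 * n →
        z ∈ Set.Ioo (x (j+1)) (x j) ∧ h.eval z = 0 := by
      intro j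
      by_cases hj : j ≤ 2 * n
      · obtain ⟨z, hz1, hz2⟩ := hroot j hj
        exact ⟨z, fun _ => ⟨hz1, hz2⟩⟩
      · exact ⟨0, fun hj' => absurd hj' hj⟩
    choose z hzp using hroot'
    have hxn : 0 < x n := by
      rw [hx]
      apply Real.cos_pos_of_mem_Ioo
      constructor
      · have h8 : (0:ℝ) ≤ (n:ℝ) * Real.pi / (2 * (n:ℝ) + 1) := by positivity
        linarith
      · rw [div_lt_iff₀ hden]
        linarith
    have hxn1 : x (n+1) < 0 := by
      rw [hx]
      apply Real.cos_neg_of_pi_div_two_lt_of_lt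
      · rw [lt_div_iff₀ hden]
        push_cast
        linarith
      · have hm := (hargmem (n+1) (by omega)).2
        linarith
    have hzne : ∀ j : ℕ, j ≤ 2 * n → j ≠ n → z j ≠ 0 := by
      intro j hj hjn
      obtain ⟨⟨hz1, hz2⟩, _⟩ := hzp j hj
      rcases lt_or_gt_of_ne hjn with hlt | hgt
      · have h9 : x n ≤ x (j+1) := hxle (j+1) n (by omega) (by omega)
        exact ne_of_gt (by linarith)
      · have h9 : x j ≤ x (n+1) := hxle (n+1) j (by omega) (by omega)
        exact ne_of_lt (by linarith)
    have hgroot : ∀ j : ℕ, j ≤ 2 * n → j ≠ n → g.eval (z j) = 0 := by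
      intro j hj hjn
      have h7 := (hzp j hj).2
      rw [hg, eval_mul, eval_pow, eval_X] at h7
      exact (mul_eq_zero.mp h7).resolve_left (pow_ne_zero _ (hzne j hj hjn))
    have hzmono : ∀ j k : ℕ, j < k → k ≤ 2 * n → z k < z j := by
      intro j k hjk hk
      obtain ⟨⟨hj1, hj2⟩, _⟩ := hzp j (by omega)
      obtain ⟨⟨hk1, hk2⟩, _⟩ := hzp k hk
      have h9 : x k ≤ x (j+1) := hxle (j+1) k (by omega) (by omega)
      linarith
    have hinj : Set.InjOn z ((Finset.range (2*n+1)).erase n) := by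
      intro a ha b hb hab
      simp only [Finset.coe_erase, Set.mem_diff, Finset.coe_range, Set.mem_Iio] at ha hb
      by_contra hne
      rcases Nat.lt_or_ge a b with hlt | hge
      · exact absurd hab (ne_of_gt (hzmono a b hlt (by omega)))
      · have hba : b < a := by omega
        exact absurd hab.symm (ne_of_gt (hzmono b a hba (by omega)))
    set Z : Finset ℝ := ((Finset.range (2*n+1)).erase n).image z with hZ
    have hZcard : Z.card = 2 * n := by
      have he := Finset.card_erase_of_mem
        (show n ∈ Finset.range (2*n+1) from Finset.mem_range.mpr (by omega))
      rw [hZ, Finset.card_image_of_injOn hinj, he, Finset.card_range]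
      omega
    have hZsub : Z ⊆ g.roots.toFinset := by
      intro w hw
      obtain ⟨j, hj, rfl⟩ := Finset.mem_image.mp hw
      simp only [Finset.mem_erase, Finset.mem_range] at hj
      rw [Multiset.mem_toFinset, mem_roots hgne]
      exact hgroot j (by omega) hj.1
    have hcard : Z.card ≤ g.natDegree :=
      le_trans (Finset.card_le_card hZsub)
        (le_trans (Multiset.toFinset_card_le _) (Polynomial.card_roots' g))
    rw [hZcard] at hcard
    omega
end
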